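/- arXiv:2108.06390 — 3 statements merged into one kernel-verified Lean document; each statement's English description precedes it below -/
import Mathlib

section
/- There is an absolute constant C > 0 such that for every integer n and every real x > 0, the Bessel function of the first kind satisfies |J_n(x)| ≤ C (1 + |n|)^{1/2} x^{-1/2}. -/
open Real MeasureTheory intervalIntegral Set

/-- The Bessel function of the first kind of integer order `n`, defined via the
integral representation `J_n(x) = (1/(2π)) ∫_{-π}^{π} e^{i(n s + x sin s)} ds`
(the integral is real, so we take the real part). -/
noncomputable def besselJ (n : ℤ) (x : ℝ) : ℝ :=
  (1 / (2 * Real.pi)) *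
    (∫ s in (-Real.pi)..Real.pi,
      Complex.exp (Complex.I * ((n : ℂ) * (s : ℂ) + (x : ℂ) * (Real.sin s : ℂ)))).re

namespace BesselProof

/-- The integrand of the Bessel integral. -/
noncomputable def f (n : ℤ) (x : ℝ) (s : ℝ) : ℂ :=
  Complex.exp (Complex.I * ((n : ℂ) * (s : ℂ) + (x : ℂ) * (Real.sin s : ℂ)))

/-- The derivative of the phase `n s + x sin s`. -/
noncomputable def p (n : ℤ) (x : ℝ) (s : ℝ) : ℝ := (n : ℝ) + x * Real.cos s

lemma f_eq (n : ℤ) (x s : ℝ) :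
    f n x s = Complex.exp ((((n : ℝ) * s + x * Real.sin s : ℝ) : ℂ) * Complex.I) := by
  unfold f; push_cast; ring_nf

lemma norm_f (n : ℤ) (x s : ℝ) : ‖f n x s‖ = 1 := by
  rw [f_eq, Complex.norm_exp_ofReal_mul_I]

lemma continuous_f (n : ℤ) (x : ℝ) : Continuous (f n x) := by
  unfold f; fun_prop

lemma hasDerivAt_phase (n : ℤ) (x s : ℝ) :
    HasDerivAt (fun s : ℝ => (n : ℝ) * s + x * Real.sin s) (p n x s) s := by
  have h1 : HasDerivAt (fun s : ℝ => (n : ℝ) * s) ((n : ℝ)) s := by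
    simpa using (hasDerivAt_id s).const_mul (n : ℝ)
  have h2 : HasDerivAt (fun s : ℝ => x * Real.sin s) (x * Real.cos s) s :=
    (Real.hasDerivAt_sin s).const_mul x
  exact h1.add h2

lemma hasDerivAt_f (n : ℤ) (x s : ℝ) :
    HasDerivAt (f n x) (Complex.I * (p n x s) * f n x s) s := by
  have h0 : (f n x) = fun s : ℝ =>
      Complex.exp ((((n : ℝ) * s + x * Real.sin s : ℝ) : ℂ) * Complex.I) :=
    funext fun s => f_eq n x s
  have h1 := ((hasDerivAt_phase n x s).ofReal_comp.mul_const Complex.I).cexp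
  rw [h0]
  convert h1 using 1
  simp only []
  ring

lemma hasDerivAt_p (n : ℤ) (x s : ℝ) :
    HasDerivAt (p n x) (-(x * Real.sin s)) s := by
  have h2 : HasDerivAt (fun s : ℝ => x * Real.cos s) (x * -Real.sin s) s :=
    (Real.hasDerivAt_cos s).const_mul x
  have := (h2.const_add (n : ℝ))
  simp only [mul_neg] at this; exact this


lemma continuous_p (n : ℤ) (x : ℝ) : Continuous (p n x) := by unfold p; fun_prop

/-- Van der Corput style integration by parts bound. -/
lemma osc (n : ℤ) {x : ℝ} (hx : 0 ≤ x) {a b : ℝ} (hab : a ≤ b)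
    (hsin : ∀ s ∈ Icc a b, 0 ≤ Real.sin s)
    (hp : ∀ s ∈ Icc a b, p n x s ≠ 0) :
    ‖∫ s in a..b, f n x s‖ ≤
      1 / |p n x a| + 1 / |p n x b| + ((p n x b)⁻¹ - (p n x a)⁻¹) := by
  have huIcc : uIcc a b = Icc a b := uIcc_of_le hab
  set q : ℝ → ℝ := fun s => (p n x s)⁻¹ with hq
  set q' : ℝ → ℝ := fun s => x * Real.sin s / (p n x s) ^ 2 with hq'
  have hqd : ∀ s ∈ Icc a b, HasDerivAt q (q' s) s := by
    intro s hs
    have : HasDerivAt q (-(-(x * Real.sin s)) / (p n x s) ^ 2) s := (hasDerivAt_p n x s).inv (hp s hs)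
    convert this using 1
    show x * Real.sin s / (p n x s) ^ 2 = _
    ring
  -- continuity facts
  have hpc : ContinuousOn (p n x) (Icc a b) := (continuous_p n x).continuousOn
  have hqc : ContinuousOn q (Icc a b) := hpc.inv₀ hp
  have hq'c : ContinuousOn q' (Icc a b) := by
    apply ContinuousOn.div (by fun_prop) (by fun_prop)
    intro s hs; exact pow_ne_zero 2 (hp s hs)
  set u : ℝ → ℂ := fun s => -Complex.I * (q s : ℂ) with hu
  set u' : ℝ → ℂ := fun s => -Complex.I * (q' s : ℂ) with hu'
  set v' : ℝ → ℂ := fun s => Complex.I * (p n x s) * f n x s with hv'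
  have hud : ∀ s ∈ Icc a b, HasDerivAt u (u' s) s := fun s hs =>
    ((hqd s hs).ofReal_comp).const_mul (-Complex.I)
  have huc : ContinuousOn u (Icc a b) := by
    apply ContinuousOn.mul continuousOn_const
    exact Complex.continuous_ofReal.comp_continuousOn hqc
  have hu'c : ContinuousOn u' (Icc a b) := by
    apply ContinuousOn.mul continuousOn_const
    exact Complex.continuous_ofReal.comp_continuousOn hq'c
  have hv'c : Continuous v' := by
    apply Continuous.mul (by unfold p; fun_prop) (continuous_f n x)
  have hIoo : Ioo (min a b) (max a b) ⊆ Icc a b := by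
    rw [min_eq_left hab, max_eq_right hab]; exact Ioo_subset_Icc_self
  have ibp :
      ∫ s in a..b, u s * v' s =
        u b * f n x b - u a * f n x a - ∫ s in a..b, u' s * f n x s := by
    apply integral_mul_deriv_eq_deriv_mul_of_hasDerivAt
    · rwa [huIcc]
    · exact (continuous_f n x).continuousOn
    · exact fun s hs => hud s (hIoo hs)
    · exact fun s hs => hasDerivAt_f n x s
    · rw [intervalIntegrable_iff_integrableOn_Icc_of_le hab]
      exact hu'c.integrableOn_Icc
    · exact hv'c.intervalIntegrable a b
  have hmain : ∫ s in a..b, f n x s = ∫ s in a..b, u s * v' s := by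
    apply integral_congr
    intro s hs
    rw [huIcc] at hs
    have hps := hp s hs
    simp only [hu, hv', hq]
    rw [show -Complex.I * ((p n x s)⁻¹ : ℝ) * (Complex.I * (p n x s) * f n x s)
        = (-Complex.I * Complex.I) * (((p n x s)⁻¹ : ℝ) * ((p n x s : ℝ) : ℂ)) * f n x s by ring]
    rw [show (-Complex.I * Complex.I) = 1 by simp [Complex.I_mul_I]]
    push_cast
    rw [inv_mul_cancel₀ (by exact_mod_cast hps)]
    simp
  -- norm of the remaining integral
  have hnorm_u' : ∀ s ∈ Icc a b, ‖u' s * f n x s‖ = q' s := by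
    intro s hs
    rw [norm_mul, norm_f, mul_one, hu', norm_mul]
    simp only [norm_neg, Complex.norm_I, one_mul, Complex.norm_real]
    rw [Real.norm_eq_abs, abs_of_nonneg]
    apply div_nonneg (mul_nonneg hx (hsin s hs)) (sq_nonneg _)
  have hq'int : IntervalIntegrable q' volume a b := by
    rw [intervalIntegrable_iff_integrableOn_Icc_of_le hab]; exact hq'c.integrableOn_Icc
  have hftc : ∫ s in a..b, q' s = q b - q a := by
    apply integral_eq_sub_of_hasDerivAt
    · intro s hs; rw [huIcc] at hs; exact hqd s hs
    · exact hq'int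
  have h3 : ‖∫ s in a..b, u' s * f n x s‖ ≤ (p n x b)⁻¹ - (p n x a)⁻¹ := by
    calc ‖∫ s in a..b, u' s * f n x s‖ ≤ ∫ s in a..b, ‖u' s * f n x s‖ :=
        norm_integral_le_integral_norm hab
    _ = ∫ s in a..b, q' s := by
        apply integral_congr; intro s hs; rw [huIcc] at hs; exact hnorm_u' s hs
    _ = (p n x b)⁻¹ - (p n x a)⁻¹ := hftc
  have hnu : ∀ s, ‖u s * f n x s‖ = 1 / |p n x s| := by
    intro s
    rw [norm_mul, norm_f, mul_one, hu, norm_mul]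
    simp only [norm_neg, Complex.norm_I, one_mul, Complex.norm_real, Real.norm_eq_abs, hq]
    rw [abs_inv, one_div]
  rw [hmain, ibp]
  calc ‖u b * f n x b - u a * f n x a - ∫ s in a..b, u' s * f n x s‖
      ≤ ‖u b * f n x b - u a * f n x a‖ + ‖∫ s in a..b, u' s * f n x s‖ := norm_sub_le _ _
    _ ≤ (‖u b * f n x b‖ + ‖u a * f n x a‖) + ‖∫ s in a..b, u' s * f n x s‖ := by
        gcongr; exact norm_sub_le _ _
    _ ≤ (1 / |p n x b| + 1 / |p n x a|) + ((p n x b)⁻¹ - (p n x a)⁻¹) := by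
        rw [hnu, hnu]; gcongr
    _ = 1 / |p n x a| + 1 / |p n x b| + ((p n x b)⁻¹ - (p n x a)⁻¹) := by ring

lemma sin_lb_core {t : ℝ} (h1 : π/6 ≤ t) (h2 : t ≤ π/2) : 1/3 ≤ Real.sin t := by
  have hπ := Real.pi_pos
  have h0 : (0:ℝ) ≤ t := le_trans (by positivity) h1
  have hs := Real.mul_le_sin h0 h2
  calc (1:ℝ)/3 = 2/π * (π/6) := by field_simp; ring
  _ ≤ 2/π * t := by gcongr
  _ ≤ Real.sin t := hs

lemma sin_lb {t : ℝ} (h1 : π/3 - 1/20 ≤ t) (h2 : t ≤ 2*π/3 + 1/20) : 1/3 ≤ Real.sin t := by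
  have hπ3 : 3 < π := Real.pi_gt_three
  rcases le_or_gt t (π/2) with h | h
  · exact sin_lb_core (by linarith) h
  · rw [← Real.sin_pi_sub]
    exact sin_lb_core (by linarith) (by linarith)

set_option maxHeartbeats 1000000 in
lemma half_bound (n : ℤ) {x : ℝ} (hx : 100 ≤ x) (hn : |(n:ℝ)| ≤ x/2) :
    ‖∫ s in (0:ℝ)..π, f n x s‖ ≤ 26 / Real.sqrt x := by
  have hπ3 : 3 < π := Real.pi_gt_three
  have hπ4 : π < 4 := by linarith [Real.pi_lt_d2]
  have hx0 : (0:ℝ) < x := by linarith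
  obtain ⟨δ, hδdef⟩ : ∃ d : ℝ, d = (Real.sqrt x)⁻¹ := ⟨_, rfl⟩
  have hsq10 : 10 ≤ Real.sqrt x := by
    rw [show (10:ℝ) = Real.sqrt 100 by
      rw [show (100:ℝ) = 10^2 by norm_num, Real.sqrt_sq (by norm_num)]]
    exact Real.sqrt_le_sqrt hx
  have hsq0 : 0 < Real.sqrt x := by linarith
  have hδ0 : 0 < δ := by rw [hδdef]; positivity
  have hδ10 : δ ≤ 1/10 := by
    rw [hδdef, show (1:ℝ)/10 = 10⁻¹ by norm_num]
    exact inv_anti₀ (by norm_num) hsq10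
  have habs := abs_le.mp hn
  obtain ⟨c, hcdef⟩ : ∃ d : ℝ, d = -(n:ℝ)/x := ⟨_, rfl⟩
  have hc : |c| ≤ 1/2 := by
    rw [hcdef, abs_div, abs_neg, abs_of_pos hx0, div_le_iff₀ hx0]; linarith
  have hcc := abs_le.mp hc
  obtain ⟨t0, ht0def⟩ : ∃ t : ℝ, t = Real.arccos c := ⟨_, rfl⟩
  have ht00 : 0 ≤ t0 := by rw [ht0def]; exact Real.arccos_nonneg c
  have ht0π : t0 ≤ π := by rw [ht0def]; exact Real.arccos_le_pi c
  have hcos : Real.cos t0 = c := by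
    rw [ht0def]; exact Real.cos_arccos (by linarith) (by linarith)
  have ht0l : π/3 ≤ t0 := by
    by_contra h
    push_neg at h
    have h2 := Real.cos_lt_cos_of_nonneg_of_le_pi ht00 (by linarith) h
    rw [Real.cos_pi_div_three, hcos] at h2
    linarith
  have ht0u : t0 ≤ 2*π/3 := by
    by_contra h
    push_neg at h
    have h2 := Real.cos_lt_cos_of_nonneg_of_le_pi (by positivity) ht0π h
    rw [show (2*π/3 : ℝ) = π - π/3 by ring, Real.cos_pi_sub, Real.cos_pi_div_three, hcos] at h2
    linarith
  have hxc : x * Real.cos t0 = -(n:ℝ) := by rw [hcos, hcdef]; field_simp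
  have hpeq : ∀ s, p n x s = x * (Real.cos s - Real.cos t0) := by
    intro s; unfold p; rw [mul_sub, hxc]; ring
  have hb1 : (0:ℝ) ≤ t0 - δ := by linarith
  have hb2 : t0 - δ ≤ t0 + δ := by linarith
  have hb3 : t0 + δ ≤ π := by linarith
  have hsinδ : δ/4 ≤ Real.sin (δ/2) := by
    have hs := Real.mul_le_sin (x := δ/2) (by positivity) (by linarith)
    have : δ/4 ≤ 2/π * (δ/2) := by
      rw [show 2/π * (δ/2) = δ/π by field_simp]
      apply div_le_div_of_nonneg_left hδ0.le (by positivity) (by linarith)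
    linarith
  -- lower bound for p at the left cut point
  have hL : x*δ/6 ≤ p n x (t0 - δ) := by
    rw [hpeq, Real.cos_sub_cos]
    have h1 : 1/3 ≤ Real.sin ((t0 - δ + t0)/2) := sin_lb (by linarith) (by linarith)
    have h2 : Real.sin ((t0 - δ - t0)/2) = -Real.sin (δ/2) := by
      rw [show (t0 - δ - t0)/2 = -(δ/2) by ring, Real.sin_neg]
    rw [h2]
    nlinarith [mul_nonneg (sub_nonneg.mpr h1) (sub_nonneg.mpr hsinδ), hδ0.le, hx0.le,
      mul_pos hx0 hδ0]
  -- upper bound for p at the right cut point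
  have hR : p n x (t0 + δ) ≤ -(x*δ/6) := by
    rw [hpeq, Real.cos_sub_cos]
    have h1 : 1/3 ≤ Real.sin ((t0 + δ + t0)/2) := sin_lb (by linarith) (by linarith)
    have h2 : Real.sin ((t0 + δ - t0)/2) = Real.sin (δ/2) := by
      rw [show (t0 + δ - t0)/2 = δ/2 by ring]
    rw [h2]
    nlinarith [mul_nonneg (sub_nonneg.mpr h1) (sub_nonneg.mpr hsinδ), hδ0.le, hx0.le,
      mul_pos hx0 hδ0]
  have hxδ : x * δ = Real.sqrt x := by
    rw [hδdef, ← div_eq_mul_inv, Real.div_sqrt]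
  have hxδ0 : 0 < x * δ := mul_pos hx0 hδ0
  -- left piece
  have left : ‖∫ s in (0:ℝ)..(t0 - δ), f n x s‖ ≤ 12 / (x*δ) := by
    have hppos : ∀ s ∈ Icc (0:ℝ) (t0 - δ), 0 < p n x s := by
      intro s hs
      rw [hpeq]
      apply mul_pos hx0
      rw [sub_pos]
      exact Real.cos_lt_cos_of_nonneg_of_le_pi hs.1 (by linarith) (by linarith [hs.2])
    have h0 := hppos 0 ⟨le_refl _, hb1⟩
    have hbb := hppos (t0 - δ) ⟨hb1, le_refl _⟩
    have := osc n hx0.le hb1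
      (fun s hs => Real.sin_nonneg_of_nonneg_of_le_pi hs.1 (by linarith [hs.2]))
      (fun s hs => (hppos s hs).ne')
    calc ‖∫ s in (0:ℝ)..(t0 - δ), f n x s‖
        ≤ 1 / |p n x 0| + 1 / |p n x (t0 - δ)| + ((p n x (t0 - δ))⁻¹ - (p n x 0)⁻¹) := this
      _ = 2 / p n x (t0 - δ) := by
          rw [abs_of_pos h0, abs_of_pos hbb]
          field_simp
          ring
      _ ≤ 12 / (x*δ) := by
          rw [div_le_div_iff₀ hbb hxδ0]
          nlinarith [hL]
  -- right piece
  have right : ‖∫ s in (t0 + δ)..π, f n x s‖ ≤ 12 / (x*δ) := by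
    have hpneg : ∀ s ∈ Icc (t0 + δ) π, p n x s < 0 := by
      intro s hs
      rw [hpeq]
      have : Real.cos s < Real.cos t0 :=
        Real.cos_lt_cos_of_nonneg_of_le_pi (by positivity) hs.2 (by linarith [hs.1])
      nlinarith
    have ha := hpneg (t0 + δ) ⟨le_refl _, hb3⟩
    have hbb := hpneg π ⟨hb3, le_refl _⟩
    have := osc n hx0.le hb3
      (fun s hs => Real.sin_nonneg_of_nonneg_of_le_pi (by linarith [hs.1]) hs.2)
      (fun s hs => (hpneg s hs).ne)
    calc ‖∫ s in (t0 + δ)..π, f n x s‖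
        ≤ 1 / |p n x (t0 + δ)| + 1 / |p n x π| + ((p n x π)⁻¹ - (p n x (t0 + δ))⁻¹) := this
      _ = 2 / -(p n x (t0 + δ)) := by
          rw [abs_of_neg ha, abs_of_neg hbb]
          field_simp
          ring
      _ ≤ 12 / (x*δ) := by
          rw [div_le_div_iff₀ (by linarith) hxδ0]
          nlinarith [hR]
  -- middle piece
  have middle : ‖∫ s in (t0 - δ)..(t0 + δ), f n x s‖ ≤ 2*δ := by
    have := norm_integral_le_of_norm_le_const (C := 1)
      (f := f n x) (a := t0 - δ) (b := t0 + δ) (fun s _ => le_of_eq (norm_f n x s))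
    calc ‖∫ s in (t0 - δ)..(t0 + δ), f n x s‖ ≤ 1 * |(t0 + δ) - (t0 - δ)| := this
      _ = 2*δ := by rw [one_mul, show (t0 + δ) - (t0 - δ) = 2*δ by ring, abs_of_pos (by linarith)]
  -- combine
  have hi : ∀ a b : ℝ, IntervalIntegrable (f n x) volume a b :=
    fun a b => (continuous_f n x).intervalIntegrable a b
  have hsplit : ∫ s in (0:ℝ)..π, f n x s =
      (∫ s in (0:ℝ)..(t0 - δ), f n x s) + (∫ s in (t0 - δ)..(t0 + δ), f n x s)
        + (∫ s in (t0 + δ)..π, f n x s) := by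
    rw [integral_add_adjacent_intervals (hi _ _) (hi _ _),
      integral_add_adjacent_intervals (hi _ _) (hi _ _)]
  calc ‖∫ s in (0:ℝ)..π, f n x s‖
      ≤ ‖∫ s in (0:ℝ)..(t0 - δ), f n x s‖ + ‖∫ s in (t0 - δ)..(t0 + δ), f n x s‖
        + ‖∫ s in (t0 + δ)..π, f n x s‖ := by rw [hsplit]; exact norm_add₃_le
    _ ≤ 12 / (x*δ) + 2*δ + 12 / (x*δ) := by gcongr
    _ = 26 / Real.sqrt x := by
        rw [hxδ, hδdef]
        field_simp
        ring


lemma integral_conj' {g : ℝ → ℂ} {a b : ℝ} :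
    (∫ s in a..b, (starRingEnd ℂ) (g s)) = (starRingEnd ℂ) (∫ s in a..b, g s) := by
  simp [intervalIntegral, integral_conj]

lemma f_neg (n : ℤ) (x s : ℝ) : f n x (-s) = (starRingEnd ℂ) (f n x s) := by
  unfold f
  rw [← Complex.exp_conj]
  congr 1
  simp only [map_mul, map_add, Complex.conj_I, Complex.conj_ofReal, map_intCast,
    Complex.ofReal_neg, Real.sin_neg]
  ring

lemma whole (n : ℤ) (x : ℝ) :
    ‖∫ s in (-π)..π, f n x s‖ ≤ 2 * ‖∫ s in (0:ℝ)..π, f n x s‖ := by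
  have hi : ∀ a b : ℝ, IntervalIntegrable (f n x) volume a b :=
    fun a b => (continuous_f n x).intervalIntegrable a b
  have hsplit : (∫ s in (-π)..π, f n x s)
      = (∫ s in (-π)..(0:ℝ), f n x s) + ∫ s in (0:ℝ)..π, f n x s :=
    (integral_add_adjacent_intervals (hi _ _) (hi _ _)).symm
  have hneg : (∫ s in (-π)..(0:ℝ), f n x s)
      = (starRingEnd ℂ) (∫ s in (0:ℝ)..π, f n x s) := by
    rw [← integral_conj']
    have h1 := integral_comp_neg (a := (0:ℝ)) (b := π) (f := f n x)
    rw [neg_zero] at h1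
    rw [← h1]
    exact integral_congr fun s _ => f_neg n x s
  rw [hsplit, hneg]
  calc ‖(starRingEnd ℂ) (∫ s in (0:ℝ)..π, f n x s) + ∫ s in (0:ℝ)..π, f n x s‖
      ≤ ‖(starRingEnd ℂ) (∫ s in (0:ℝ)..π, f n x s)‖ + ‖∫ s in (0:ℝ)..π, f n x s‖ :=
        norm_add_le _ _
    _ = 2 * ‖∫ s in (0:ℝ)..π, f n x s‖ := by rw [RCLike.norm_conj]; ring




lemma abs_bessel_le (n : ℤ) (x : ℝ) :
    |besselJ n x| ≤ (1 / (2*π)) * ‖∫ s in (-π)..π, f n x s‖ := by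
  have hπ := Real.pi_pos
  rw [show besselJ n x = (1 / (2*π)) * (∫ s in (-π)..π, f n x s).re from rfl, abs_mul,
    abs_of_pos (by positivity)]
  gcongr
  exact Complex.abs_re_le_norm _

lemma trivialBound (n : ℤ) (x : ℝ) : |besselJ n x| ≤ 1 := by
  have hπ := Real.pi_pos
  calc |besselJ n x| ≤ (1 / (2*π)) * ‖∫ s in (-π)..π, f n x s‖ := abs_bessel_le n x
    _ ≤ (1 / (2*π)) * (1 * |π - (-π)|) := by
        gcongr
        exact norm_integral_le_of_norm_le_const fun s _ => le_of_eq (norm_f n x s)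
    _ = 1 := by
        rw [one_mul, show π - (-π) = 2*π by ring, abs_of_pos (by positivity)]
        field_simp
    
lemma mainBound (n : ℤ) {x : ℝ} (hx : 100 ≤ x) (hn : |(n:ℝ)| ≤ x/2) :
    |besselJ n x| ≤ 9 / Real.sqrt x := by
  have hπ := Real.pi_gt_three
  have hsx : 0 < Real.sqrt x := Real.sqrt_pos.mpr (by linarith)
  calc |besselJ n x| ≤ (1 / (2*π)) * ‖∫ s in (-π)..π, f n x s‖ := abs_bessel_le n x
    _ ≤ (1 / (2*π)) * (2 * (26 / Real.sqrt x)) :=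
        mul_le_mul_of_nonneg_left
          ((whole n x).trans (by gcongr; exact half_bound n hx hn)) (by positivity)
    _ = 26 / (π * Real.sqrt x) := by field_simp
    _ ≤ 9 / Real.sqrt x := by
        rw [div_le_div_iff₀ (by positivity) hsx]
        nlinarith


end BesselProof

/-- There is an absolute constant `C > 0` such that for every integer `n` and every
real `x > 0`, `|J_n(x)| ≤ C (1 + |n|)^{1/2} x^{-1/2}`. -/
theorem besselJ_decay :
    ∃ C : ℝ, 0 < C ∧ ∀ (n : ℤ) (x : ℝ), 0 < x →
      |besselJ n x| ≤ C * (1 + |(n : ℝ)|) ^ ((1 : ℝ) / 2) * x ^ (-(1 : ℝ) / 2) := by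
  refine ⟨10, by norm_num, ?_⟩
  intro n x hx
  have e1 : (1 + |(n:ℝ)|) ^ ((1:ℝ)/2) = Real.sqrt (1 + |(n:ℝ)|) :=
    (Real.sqrt_eq_rpow _).symm
  have e2 : x ^ (-(1:ℝ)/2) = (Real.sqrt x)⁻¹ := by
    rw [show (-(1:ℝ)/2) = -((1:ℝ)/2) by ring, Real.rpow_neg hx.le, ← Real.sqrt_eq_rpow]
  rw [e1, e2]
  have habs : (0:ℝ) ≤ |(n:ℝ)| := abs_nonneg _
  have hs1 : 1 ≤ Real.sqrt (1 + |(n:ℝ)|) := by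
    rw [Real.le_sqrt zero_le_one (by positivity)]
    nlinarith
  have hsx0 : 0 < Real.sqrt x := Real.sqrt_pos.mpr hx
  have hinv0 : (0:ℝ) ≤ (Real.sqrt x)⁻¹ := by positivity
  rcases lt_or_ge x 100 with h | h
  · have h2 : Real.sqrt x ≤ 10 := by
      rw [show (10:ℝ) = Real.sqrt 100 by
        rw [show (100:ℝ) = 10^2 by norm_num, Real.sqrt_sq (by norm_num)]]
      exact Real.sqrt_le_sqrt h.le
    have h3 : (10:ℝ)⁻¹ ≤ (Real.sqrt x)⁻¹ := inv_anti₀ hsx0 h2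
    calc |besselJ n x| ≤ 1 := BesselProof.trivialBound n x
      _ ≤ 10 * Real.sqrt (1 + |(n:ℝ)|) * (Real.sqrt x)⁻¹ := by nlinarith
  rcases le_or_gt (|(n:ℝ)|) (x/2) with hn | hn
  · calc |besselJ n x| ≤ 9 / Real.sqrt x := BesselProof.mainBound n h hn
      _ = 9 * (Real.sqrt x)⁻¹ := by rw [div_eq_mul_inv]
      _ ≤ 10 * Real.sqrt (1 + |(n:ℝ)|) * (Real.sqrt x)⁻¹ := by nlinarith
  · have h2 : Real.sqrt x / 2 ≤ Real.sqrt (1 + |(n:ℝ)|) := by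
      rw [Real.le_sqrt (by positivity) (by positivity)]
      rw [div_pow, Real.sq_sqrt hx.le]
      linarith
    have h4 : (10:ℝ) * (Real.sqrt x/2) * (Real.sqrt x)⁻¹ = 5 := by
      field_simp
      ring
    calc |besselJ n x| ≤ 1 := BesselProof.trivialBound n x
      _ ≤ 10 * (Real.sqrt x/2) * (Real.sqrt x)⁻¹ := by rw [h4]; norm_num
      _ ≤ 10 * Real.sqrt (1 + |(n:ℝ)|) * (Real.sqrt x)⁻¹ := by gcongr
end

section
/- There is an absolute constant C > 0 such that for every r > 0 the absolutely convergent integral ∫_0^∞ J_1(σ)/√(r² + σ²) dσ satisfies both ∫_0^∞ J_1(σ)/√(r² + σ²) dσ ≤ 2/r and |∫_0^∞ J_1(σ)/√(r² + σ²) dσ| ≤ C r^{-1/2}. -/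
open MeasureTheory intervalIntegral Real Set Filter Topology


lemma besselJ_eq (n : ℤ) (x : ℝ) :
    besselJ n x = (1 / (2 * π)) * ∫ s in (-π)..π, Real.cos (n * s + x * Real.sin s) := by
  unfold besselJ
  congr 1
  have h : ∀ s : ℝ, Complex.exp (Complex.I * ((n : ℂ) * (s : ℂ) + (x : ℂ) * (Real.sin s : ℂ)))
      = Complex.exp (((n * s + x * Real.sin s : ℝ) : ℂ) * Complex.I) := by
    intro s; push_cast; ring_nf
  simp_rw [h, Complex.exp_mul_I]
  have hint : IntervalIntegrable
      (fun s : ℝ => Complex.cos ((n * s + x * Real.sin s : ℝ) : ℂ)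
        + Complex.sin ((n * s + x * Real.sin s : ℝ) : ℂ) * Complex.I)
      volume (-π) π := by
    apply Continuous.intervalIntegrable
    fun_prop
  have := (Complex.reCLM.intervalIntegral_comp_comm hint).symm
  simp only [Complex.reCLM_apply] at this
  rw [this]
  apply intervalIntegral.integral_congr
  intro s _
  beta_reduce
  simp only [Complex.add_re, Complex.mul_re, Complex.I_re, Complex.I_im,
    Complex.cos_ofReal_re, Complex.sin_ofReal_im, Complex.sin_ofReal_re]
  ring

noncomputable def Cint (n : ℤ) (x : ℝ) : ℝ := ∫ s in (-π)..π, Real.cos (n * s + x * Real.sin s)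

lemma cint_intable (n : ℤ) (x : ℝ) :
    IntervalIntegrable (fun s => Real.cos (n * s + x * Real.sin s)) volume (-π) π :=
  Continuous.intervalIntegrable (by fun_prop) _ _

lemma Cint_recur (n : ℤ) (x : ℝ) :
    (n : ℝ) * Cint n x + x / 2 * (Cint (n+1) x + Cint (n-1) x) = 0 := by
  have hderiv : ∀ s ∈ uIcc (-π) π, HasDerivAt (fun s : ℝ => Real.sin (n * s + x * Real.sin s))
      (((n : ℝ) + x * Real.cos s) * Real.cos (n * s + x * Real.sin s)) s := by
    intro s _
    have h1 : HasDerivAt (fun s : ℝ => (n : ℝ) * s + x * Real.sin s)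
        ((n : ℝ) + x * Real.cos s) s :=
      ((hasDerivAt_id s).const_mul (n : ℝ)).add ((Real.hasDerivAt_sin s).const_mul x) |>.congr_deriv
        (by simp [mul_comm])
    simpa [mul_comm, Function.comp_def] using (Real.hasDerivAt_sin (n * s + x * Real.sin s)).comp s h1
  have hftc := intervalIntegral.integral_eq_sub_of_hasDerivAt hderiv
    (Continuous.intervalIntegrable (by fun_prop) _ _)
  have hzero : (∫ s in (-π)..π, ((n : ℝ) + x * Real.cos s) * Real.cos (n * s + x * Real.sin s)) = 0 := by
    rw [hftc]
    simp [mul_neg, Real.sin_neg, Real.sin_int_mul_pi]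
  rw [← hzero]
  unfold Cint
  rw [← intervalIntegral.integral_const_mul, ← intervalIntegral.integral_add (cint_intable _ _)
    (cint_intable _ _), ← intervalIntegral.integral_const_mul,
    ← intervalIntegral.integral_add ((cint_intable n x).const_mul _)
    (((cint_intable _ _).add (cint_intable _ _)).const_mul _)]
  apply intervalIntegral.integral_congr
  intro s _
  have e1 : ((n + 1 : ℤ) : ℝ) * s + x * Real.sin s = (n * s + x * Real.sin s) + s := by
    push_cast; ring
  have e2 : ((n - 1 : ℤ) : ℝ) * s + x * Real.sin s = (n * s + x * Real.sin s) - s := by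
    push_cast; ring
  simp only [e1, e2, Real.cos_add, Real.cos_sub]
  ring



lemma hasDerivAt_Cint (n : ℤ) (x : ℝ) :
    HasDerivAt (Cint n) ((Cint (n+1) x - Cint (n-1) x) / 2) x := by
  have key := intervalIntegral.hasDerivAt_integral_of_dominated_loc_of_deriv_le
      (F := fun y s => Real.cos (n * s + y * Real.sin s))
      (F' := fun y s => -Real.sin s * Real.sin (n * s + y * Real.sin s))
      (bound := fun _ => 1) (a := -π) (b := π) (x₀ := x) (μ := volume) (s := Metric.ball x 1) (Metric.ball_mem_nhds x one_pos)
      (Filter.Eventually.of_forall fun y => (Continuous.aestronglyMeasurable (by fun_prop)))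
      (cint_intable n x)
      (Continuous.aestronglyMeasurable (by fun_prop))
      (Filter.Eventually.of_forall fun t _ => fun y _ => by
        rw [norm_mul, norm_neg]
        calc ‖Real.sin t‖ * ‖Real.sin (n * t + y * Real.sin t)‖
            ≤ 1 * 1 := by
              apply mul_le_mul (by simpa using Real.abs_sin_le_one t)
                (by simpa using Real.abs_sin_le_one _) (norm_nonneg _) zero_le_one
          _ = 1 := by norm_num)
      (intervalIntegrable_const)
      (Filter.Eventually.of_forall fun t _ => fun y _ => by
        have h1 : HasDerivAt (fun y : ℝ => n * t + y * Real.sin t) (Real.sin t) y := by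
          simpa using ((hasDerivAt_id y).mul_const (Real.sin t)).const_add ((n : ℝ) * t)
        simpa [mul_comm, Function.comp_def] using (Real.hasDerivAt_cos (n * t + y * Real.sin t)).comp y h1)
  have h2 := key.2
  have heq : (∫ s in (-π)..π, -Real.sin s * Real.sin (n * s + x * Real.sin s))
      = (Cint (n+1) x - Cint (n-1) x) / 2 := by
    unfold Cint
    rw [← intervalIntegral.integral_sub (cint_intable _ _) (cint_intable _ _),
      ← intervalIntegral.integral_div]
    apply intervalIntegral.integral_congr
    intro s _
    have e1 : ((n + 1 : ℤ) : ℝ) * s + x * Real.sin s = (n * s + x * Real.sin s) + s := by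
      push_cast; ring
    have e2 : ((n - 1 : ℤ) : ℝ) * s + x * Real.sin s = (n * s + x * Real.sin s) - s := by
      push_cast; ring
    simp only [e1, e2, Real.cos_add, Real.cos_sub]
    ring
  rw [heq] at h2
  exact h2.congr_deriv rfl



lemma besselJ_eq' (n : ℤ) (x : ℝ) : besselJ n x = (1 / (2 * π)) * Cint n x :=
  besselJ_eq n x

lemma besselJ_recur (n : ℤ) (x : ℝ) :
    (n : ℝ) * besselJ n x + x / 2 * (besselJ (n+1) x + besselJ (n-1) x) = 0 := by
  simp only [besselJ_eq']
  linear_combination (1 / (2 * π)) * Cint_recur n x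

lemma hasDerivAt_besselJ (n : ℤ) (x : ℝ) :
    HasDerivAt (besselJ n) ((besselJ (n+1) x - besselJ (n-1) x) / 2) x := by
  have h := (hasDerivAt_Cint n x).const_mul (1 / (2 * π))
  have hfun : (fun y => (1 / (2 * π)) * Cint n y) = besselJ n := by
    funext y; rw [besselJ_eq']
  rw [hfun] at h
  apply h.congr_deriv
  simp only [besselJ_eq']
  ring

lemma abs_besselJ_le_one (n : ℤ) (x : ℝ) : |besselJ n x| ≤ 1 := by
  rw [besselJ_eq']
  have h : ‖Cint n x‖ ≤ 1 * |π - (-π)| := by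
    apply intervalIntegral.norm_integral_le_of_norm_le_const
    intro s _
    simpa using Real.abs_cos_le_one _
  rw [Real.norm_eq_abs] at h
  have hpi := Real.pi_pos
  rw [abs_mul]
  have : |π - (-π)| = 2 * π := by rw [abs_of_pos]; ring; linarith
  rw [this] at h
  have h2 : |(1 : ℝ) / (2 * π)| = 1 / (2 * π) := abs_of_pos (by positivity)
  rw [h2]
  calc 1 / (2 * π) * |Cint n x| ≤ 1 / (2 * π) * (1 * (2 * π)) := by
        apply mul_le_mul_of_nonneg_left h (by positivity)
    _ = 1 := by field_simp

lemma besselJ_zero_zero : besselJ 0 0 = 1 := by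
  rw [besselJ_eq']
  have : Cint 0 0 = 2 * π := by
    unfold Cint
    simp [two_mul]
  rw [this]
  have := Real.pi_pos
  field_simp

lemma hasDerivAt_besselJ_zero {x : ℝ} (hx : x ≠ 0) :
    HasDerivAt (besselJ 0) (besselJ 1 x) x := by
  have h := hasDerivAt_besselJ 0 x
  have hr := besselJ_recur 0 x
  norm_num at h hr
  have : besselJ (-1) x = -besselJ 1 x := by
    rcases hr with h0 | h0
    · exact absurd h0 hx
    · linarith
  rw [this] at h
  simpa using h.congr_deriv (by ring)

lemma hasDerivAt_besselJ_one {x : ℝ} (hx : x ≠ 0) :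
    HasDerivAt (besselJ 1) (-besselJ 0 x - besselJ 1 x / x) x := by
  have h := hasDerivAt_besselJ 1 x
  have hr := besselJ_recur 1 x
  norm_num at h hr
  have h2 : besselJ 2 x = -2 * besselJ 1 x / x - besselJ 0 x := by
    field_simp
    linarith
  rw [h2] at h
  apply h.congr_deriv
  field_simp
  ring

lemma abs_besselJ_one_le (x : ℝ) : |besselJ 1 x| ≤ |x| := by
  have hr := besselJ_recur 1 x
  norm_num at hr
  have : besselJ 1 x = -(x/2) * (besselJ 2 x + besselJ 0 x) := by linarith
  rw [this, abs_mul]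
  calc |(-(x/2))| * |besselJ 2 x + besselJ 0 x| ≤ (|x|/2) * 2 := by
        apply mul_le_mul
        · rw [abs_neg, abs_div]; simp
        · calc |besselJ 2 x + besselJ 0 x| ≤ |besselJ 2 x| + |besselJ 0 x| := abs_add_le _ _
            _ ≤ 2 := by linarith [abs_besselJ_le_one 2 x, abs_besselJ_le_one 0 x]
        · positivity
        · positivity
    _ = |x| := by ring

lemma besselJ_continuous (n : ℤ) : Continuous (besselJ n) :=
  continuous_iff_continuousAt.2 fun x => (hasDerivAt_besselJ n x).continuousAt


noncomputable def Gf (x : ℝ) : ℝ :=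
  x * (besselJ 0 x ^ 2 + besselJ 1 x ^ 2) + besselJ 0 x * besselJ 1 x

lemma hasDerivAt_Gf {x : ℝ} (hx : x ≠ 0) :
    HasDerivAt Gf (-(besselJ 0 x * besselJ 1 x) / x) x := by
  have ha := hasDerivAt_besselJ_zero hx
  have hb := hasDerivAt_besselJ_one hx
  have h := ((hasDerivAt_id x).mul ((ha.pow 2).add (hb.pow 2))).add (ha.mul hb)
  apply h.congr_deriv
  simp only [Pi.add_apply, Pi.pow_apply, id]
  field_simp
  ring

noncomputable def Phi (x : ℝ) : ℝ := Gf x * Real.exp x⁻¹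

lemma hasDerivAt_Phi {x : ℝ} (hx : x ≠ 0) :
    HasDerivAt Phi (Real.exp x⁻¹ *
      (-(besselJ 0 x * besselJ 1 x) / x - Gf x / x ^ 2)) x := by
  have hg := hasDerivAt_Gf hx
  have he : HasDerivAt (fun y : ℝ => Real.exp y⁻¹) (Real.exp x⁻¹ * -(x^2)⁻¹) x :=
    (hasDerivAt_inv hx).exp
  have h := hg.mul he
  apply h.congr_deriv
  field_simp
  ring

lemma Phi_antitone : AntitoneOn Phi (Ici 1) := by
  have hcont : ContinuousOn Phi (Ici 1) := by
    intro x hx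
    have hx0 : x ≠ 0 := by intro h; rw [h] at hx; simp at hx; linarith
    exact (hasDerivAt_Phi hx0).continuousAt.continuousWithinAt
  apply antitoneOn_of_deriv_nonpos (convex_Ici 1) hcont
  · intro x hx
    rw [interior_Ici] at hx
    have hx0 : x ≠ 0 := by have : (1:ℝ) < x := hx; linarith
    exact (hasDerivAt_Phi hx0).differentiableAt.differentiableWithinAt
  · intro x hx
    rw [interior_Ici] at hx
    have hx1 : (1:ℝ) < x := hx
    have hx0 : x ≠ 0 := by linarith
    rw [(hasDerivAt_Phi hx0).deriv]
    have hkey : 0 ≤ Gf x + besselJ 0 x * besselJ 1 x * x := by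
      unfold Gf
      nlinarith [sq_nonneg (besselJ 0 x + besselJ 1 x), sq_nonneg (besselJ 0 x - besselJ 1 x),
        sq_nonneg (besselJ 0 x), sq_nonneg (besselJ 1 x)]
    have hx02 : (0:ℝ) < x := by linarith
    have h2 : -(besselJ 0 x * besselJ 1 x) / x - Gf x / x ^ 2 ≤ 0 := by
      rw [div_sub_div _ _ (ne_of_gt hx02) (by positivity), div_nonpos_iff]
      right
      exact ⟨by nlinarith [mul_nonneg hx02.le hkey], by positivity⟩
    exact mul_nonpos_of_nonneg_of_nonpos (Real.exp_pos _).le h2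

lemma besselJ_one_decay {x : ℝ} (hx : 1 ≤ x) : |besselJ 1 x| ≤ 5 / Real.sqrt x := by
  have hx0 : (0:ℝ) < x := by linarith
  have hPhi := Phi_antitone (by norm_num : (1:ℝ) ∈ Ici 1) (mem_Ici.2 hx) hx
  have hG1 : Gf 1 ≤ 3 := by
    unfold Gf
    have h0 := abs_le.mp (abs_besselJ_le_one 0 1)
    have h1 := abs_le.mp (abs_besselJ_le_one 1 1)
    nlinarith
  have hPhi1 : Phi 1 ≤ 9 := by
    unfold Phi
    have he : Real.exp (1:ℝ)⁻¹ ≤ 3 := by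
      rw [inv_one]
      calc Real.exp 1 ≤ 2.7182818286 := Real.exp_one_lt_d9.le
        _ ≤ 3 := by norm_num
    calc Gf 1 * Real.exp (1:ℝ)⁻¹ ≤ 3 * 3 := by
          apply mul_le_mul hG1 he (Real.exp_pos _).le (by norm_num)
      _ = 9 := by norm_num
  have hGlow : (x - 1/2) * (besselJ 0 x ^ 2 + besselJ 1 x ^ 2) ≤ Gf x := by
    unfold Gf
    nlinarith [sq_nonneg (besselJ 0 x + besselJ 1 x)]
  have hGnn : 0 ≤ Gf x :=
    le_trans (mul_nonneg (by linarith) (by positivity)) hGlow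
  have hGle : Gf x ≤ 9 := by
    calc Gf x ≤ Gf x * Real.exp x⁻¹ := le_mul_of_one_le_right hGnn (Real.one_le_exp (by positivity))
      _ = Phi x := rfl
      _ ≤ Phi 1 := hPhi
      _ ≤ 9 := hPhi1
  have hb2 : besselJ 1 x ^ 2 ≤ 25 / x := by
    have h1 : (x/2) * besselJ 1 x ^ 2 ≤ (x - 1/2) * (besselJ 0 x ^ 2 + besselJ 1 x ^ 2) := by
      nlinarith [sq_nonneg (besselJ 0 x), sq_nonneg (besselJ 1 x)]
    have := le_trans h1 (le_trans hGlow hGle)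
    rw [div_mul_eq_mul_div, le_div_iff₀ hx0] at *
    nlinarith
  calc |besselJ 1 x| = Real.sqrt (besselJ 1 x ^ 2) := (Real.sqrt_sq_eq_abs _).symm
    _ ≤ Real.sqrt (25 / x) := Real.sqrt_le_sqrt hb2
    _ = 5 / Real.sqrt x := by
        rw [show (25:ℝ)/x = (5 / Real.sqrt x)^2 by
          rw [div_pow, Real.sq_sqrt hx0.le]; norm_num]
        exact Real.sqrt_sq (by positivity)


lemma integrableOn_Ioi_of_cont_of_bound (f : ℝ → ℝ) (hf : Continuous f) (p C : ℝ) (hp : p < -1)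
    (hbd : ∀ σ, 1 ≤ σ → |f σ| ≤ C * σ ^ p) : IntegrableOn f (Ioi 0) := by
  have h1 : IntegrableOn f (Ioc 0 1) :=
    (hf.continuousOn.integrableOn_Icc).mono_set Ioc_subset_Icc_self
  have h2 : IntegrableOn f (Ioi 1) := by
    have hg : IntegrableOn (fun σ : ℝ => C * σ ^ p) (Ioi 1) :=
      (integrableOn_Ioi_rpow_of_lt hp one_pos).const_mul C
    apply Integrable.mono hg hf.aestronglyMeasurable.restrict
    rw [ae_restrict_iff' measurableSet_Ioi]
    apply Filter.Eventually.of_forall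
    intro σ hσ
    have h := hbd σ (le_of_lt hσ)
    rw [Real.norm_eq_abs, Real.norm_eq_abs]
    exact h.trans (le_abs_self _)
  have := h1.union h2
  rwa [Set.Ioc_union_Ioi_eq_Ioi (by norm_num : (0:ℝ) ≤ 1)] at this

/-- There is an absolute constant `C > 0` such that for every `r > 0` the absolutely
convergent integral `∫_0^∞ J_1(σ)/√(r² + σ²) dσ` satisfies both
`∫_0^∞ J_1(σ)/√(r² + σ²) dσ ≤ 2/r` and `|∫_0^∞ J_1(σ)/√(r² + σ²) dσ| ≤ C r^{-1/2}`. -/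
theorem besselJ_integral_bounds :
    ∃ C : ℝ, 0 < C ∧ ∀ r : ℝ, 0 < r →
      MeasureTheory.IntegrableOn
        (fun σ => besselJ 1 σ / Real.sqrt (r ^ 2 + σ ^ 2)) (Set.Ioi 0) ∧
      (∫ σ in Set.Ioi (0 : ℝ), besselJ 1 σ / Real.sqrt (r ^ 2 + σ ^ 2)) ≤ 2 / r ∧
      |∫ σ in Set.Ioi (0 : ℝ), besselJ 1 σ / Real.sqrt (r ^ 2 + σ ^ 2)| ≤
        C * r ^ (-(1 : ℝ) / 2) := by
  refine ⟨11, by norm_num, fun r hr => ?_⟩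
  set f : ℝ → ℝ := fun σ => besselJ 1 σ / Real.sqrt (r ^ 2 + σ ^ 2) with hf_def
  have hgpos : ∀ σ : ℝ, 0 < r ^ 2 + σ ^ 2 := fun σ => by positivity
  have hsqpos : ∀ σ : ℝ, 0 < Real.sqrt (r ^ 2 + σ ^ 2) := fun σ => Real.sqrt_pos.2 (hgpos σ)
  have hsq_ge : ∀ σ : ℝ, 0 ≤ σ → σ ≤ Real.sqrt (r ^ 2 + σ ^ 2) := by
    intro σ hσ
    calc σ = Real.sqrt (σ ^ 2) := (Real.sqrt_sq hσ).symm
      _ ≤ Real.sqrt (r ^ 2 + σ ^ 2) := Real.sqrt_le_sqrt (by nlinarith)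
  -- pointwise bound for f on [1, ∞)
  have hfb : ∀ σ : ℝ, 1 ≤ σ → |f σ| ≤ 5 * σ ^ (-(3:ℝ)/2) := by
    intro σ hσ
    have hσ0 : (0:ℝ) < σ := by linarith
    have h1 : |f σ| = |besselJ 1 σ| / Real.sqrt (r ^ 2 + σ ^ 2) := by
      rw [hf_def, abs_div, abs_of_pos (hsqpos σ)]
    have h2 : |besselJ 1 σ| / Real.sqrt (r ^ 2 + σ ^ 2)
        ≤ (5 / Real.sqrt σ) / σ := by
      apply div_le_div₀ (by positivity) (besselJ_one_decay hσ) hσ0 (hsq_ge σ hσ0.le)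
    have h3 : (5 / Real.sqrt σ) / σ = 5 * σ ^ (-(3:ℝ)/2) := by
      rw [Real.sqrt_eq_rpow, show (-(3:ℝ)/2) = -((1:ℝ)/2) + (-1) by norm_num,
        Real.rpow_add hσ0, Real.rpow_neg_one, Real.rpow_neg hσ0.le]
      field_simp
    rw [h1, ← h3]
    exact h2
  have hfcont : Continuous f := by
    apply Continuous.div (besselJ_continuous 1)
    · fun_prop
    · exact fun σ => ne_of_gt (hsqpos σ)
  have hfint : IntegrableOn f (Ioi 0) :=
    integrableOn_Ioi_of_cont_of_bound f hfcont (-(3:ℝ)/2) 5 (by norm_num) hfb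
  refine ⟨hfint, ?_⟩
  -- set up integration by parts
  set u : ℝ → ℝ := fun σ => (Real.sqrt (r ^ 2 + σ ^ 2))⁻¹ with hu_def
  set u' : ℝ → ℝ := fun σ => -(σ / ((r ^ 2 + σ ^ 2) * Real.sqrt (r ^ 2 + σ ^ 2))) with hu'_def
  have hu : ∀ σ : ℝ, HasDerivAt u (u' σ) σ := by
    intro σ
    have hg : HasDerivAt (fun σ : ℝ => r ^ 2 + σ ^ 2) (2 * σ) σ := by
      simpa using (hasDerivAt_pow 2 σ).const_add (r ^ 2)
    have hs : HasDerivAt (fun σ : ℝ => Real.sqrt (r ^ 2 + σ ^ 2))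
        (1 / (2 * Real.sqrt (r ^ 2 + σ ^ 2)) * (2 * σ)) σ :=
      (Real.hasDerivAt_sqrt (ne_of_gt (hgpos σ))).comp σ hg
    have h := hs.inv (ne_of_gt (hsqpos σ))
    apply h.congr_deriv
    rw [Real.sq_sqrt (hgpos σ).le]
    rw [hu'_def]
    have h1 := (hsqpos σ).ne'
    have h2 := (hgpos σ).ne'
    field_simp
  have hu'neg : ∀ σ : ℝ, 0 ≤ σ → |u' σ| = -(u' σ) := by
    intro σ hσ
    apply abs_of_nonpos
    rw [hu'_def]
    simp only [neg_nonpos]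
    positivity
  have hu'b : ∀ σ : ℝ, 1 ≤ σ → |u' σ| ≤ σ ^ (-(2:ℝ)) := by
    intro σ hσ
    have hσ0 : (0:ℝ) < σ := by linarith
    have h1 : |u' σ| = σ / ((r ^ 2 + σ ^ 2) * Real.sqrt (r ^ 2 + σ ^ 2)) := by
      rw [hu'neg σ hσ0.le, hu'_def]; ring
    rw [h1, Real.rpow_neg hσ0.le, show (2:ℝ) = ((2:ℕ):ℝ) by norm_num, Real.rpow_natCast]
    rw [div_le_iff₀ (by positivity)]
    have h2 : σ ^ 2 ≤ r ^ 2 + σ ^ 2 := by nlinarith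
    have h3 : σ ≤ Real.sqrt (r ^ 2 + σ ^ 2) := hsq_ge σ hσ0.le
    calc σ = (σ ^ 2)⁻¹ * (σ ^ 2 * σ) := by field_simp
      _ ≤ (σ ^ 2)⁻¹ * ((r ^ 2 + σ ^ 2) * Real.sqrt (r ^ 2 + σ ^ 2)) := by
          apply mul_le_mul_of_nonneg_left _ (by positivity)
          exact mul_le_mul h2 h3 hσ0.le (by positivity)
  have hu'cont : Continuous u' := by
    apply Continuous.neg
    apply Continuous.div continuous_id
    · fun_prop
    · exact fun σ => ne_of_gt (mul_pos (hgpos σ) (hsqpos σ))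
  have hu'vint : IntegrableOn (u' * besselJ 0) (Ioi 0) := by
    apply integrableOn_Ioi_of_cont_of_bound _ (hu'cont.mul (besselJ_continuous 0))
      (-(2:ℝ)) 1 (by norm_num)
    intro σ hσ
    rw [Pi.mul_apply, abs_mul, one_mul]
    calc |u' σ| * |besselJ 0 σ| ≤ |u' σ| * 1 :=
          mul_le_mul_of_nonneg_left (abs_besselJ_le_one 0 σ) (abs_nonneg _)
      _ = |u' σ| := mul_one _
      _ ≤ σ ^ (-(2:ℝ)) := hu'b σ hσ
  have hu'int : IntegrableOn u' (Ioi 0) := by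
    apply integrableOn_Ioi_of_cont_of_bound _ hu'cont (-(2:ℝ)) 1 (by norm_num)
    intro σ hσ
    rw [one_mul]
    exact hu'b σ hσ
  have huv'int : IntegrableOn (u * besselJ 1) (Ioi 0) := by
    have : u * besselJ 1 = f := by
      funext σ
      show (Real.sqrt (r ^ 2 + σ ^ 2))⁻¹ * besselJ 1 σ = besselJ 1 σ / Real.sqrt (r ^ 2 + σ ^ 2)
      rw [div_eq_mul_inv, mul_comm]
    rwa [this]
  have hucont : Continuous u := by
    apply Continuous.inv₀ _ (fun σ => ne_of_gt (hsqpos σ))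
    fun_prop
  have h_zero : Tendsto (u * besselJ 0) (𝓝[>] (0:ℝ)) (𝓝 (r⁻¹)) := by
    have hc : ContinuousAt (u * besselJ 0) 0 :=
      (hucont.mul (besselJ_continuous 0)).continuousAt
    have hval : (u * besselJ 0) 0 = r⁻¹ := by
      show (Real.sqrt (r ^ 2 + (0:ℝ) ^ 2))⁻¹ * besselJ 0 0 = r⁻¹
      rw [besselJ_zero_zero, mul_one, show r ^ 2 + (0:ℝ) ^ 2 = r ^ 2 by ring,
        Real.sqrt_sq hr.le]
    rw [← hval]
    exact hc.continuousWithinAt.tendsto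
  have h_infty : Tendsto (u * besselJ 0) atTop (𝓝 0) := by
    refine squeeze_zero_norm' ?_ (tendsto_inv_atTop_zero (𝕜 := ℝ))
    filter_upwards [eventually_ge_atTop (1:ℝ)] with σ hσ
    have hσ0 : (0:ℝ) < σ := by linarith
    rw [show (u * besselJ 0) σ = u σ * besselJ 0 σ from rfl, Real.norm_eq_abs, abs_mul]
    calc |u σ| * |besselJ 0 σ| ≤ |u σ| * 1 :=
          mul_le_mul_of_nonneg_left (abs_besselJ_le_one 0 σ) (abs_nonneg _)
      _ = (Real.sqrt (r ^ 2 + σ ^ 2))⁻¹ := by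
          rw [mul_one, show u σ = (Real.sqrt (r ^ 2 + σ ^ 2))⁻¹ from rfl,
            abs_of_pos (inv_pos.2 (hsqpos σ))]
      _ ≤ σ⁻¹ := by
          apply inv_anti₀ hσ0 (hsq_ge σ hσ0.le)
  have hv : ∀ x ∈ Ioi (0:ℝ), HasDerivAt (besselJ 0) (besselJ 1 x) x :=
    fun x hx => hasDerivAt_besselJ_zero (ne_of_gt hx)
  have hibp := integral_Ioi_mul_deriv_eq_deriv_mul (fun x _ => hu x) hv huv'int hu'vint
    h_zero h_infty
  -- hibp : ∫ x in Ioi 0, u x * besselJ 1 x = 0 - r⁻¹ - ∫ x in Ioi 0, u' x * besselJ 0 x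
  have hfeq : (∫ σ in Ioi (0:ℝ), f σ) = ∫ x in Ioi (0:ℝ), u x * besselJ 1 x := by
    apply setIntegral_congr_fun measurableSet_Ioi
    intro σ _
    show besselJ 1 σ / Real.sqrt (r ^ 2 + σ ^ 2) = (Real.sqrt (r ^ 2 + σ ^ 2))⁻¹ * besselJ 1 σ
    rw [div_eq_mul_inv, mul_comm]
  -- bound on the remainder integral S
  set S : ℝ := ∫ x in Ioi (0:ℝ), u' x * besselJ 0 x with hS_def
  have hminusu' : (∫ x in Ioi (0:ℝ), -(u' x)) = r⁻¹ := by
    have hder : ∀ x ∈ Ioi (0:ℝ), HasDerivAt (fun σ => -(u σ)) (-(u' x)) x :=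
      fun x _ => (hu x).neg
    have hcont0 : ContinuousWithinAt (fun σ => -(u σ)) (Ici 0) 0 :=
      (hucont.neg.continuousAt (x := 0)).continuousWithinAt
    have htop : Tendsto (fun σ => -(u σ)) atTop (𝓝 0) := by
      have h2 : Tendsto u atTop (𝓝 0) := by
        refine squeeze_zero_norm' ?_ (tendsto_inv_atTop_zero (𝕜 := ℝ))
        filter_upwards [eventually_ge_atTop (1:ℝ)] with σ hσ
        have hσ0 : (0:ℝ) < σ := by linarith
        rw [show u σ = (Real.sqrt (r ^ 2 + σ ^ 2))⁻¹ from rfl, Real.norm_eq_abs,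
          abs_of_pos (inv_pos.2 (hsqpos σ))]
        exact inv_anti₀ hσ0 (hsq_ge σ hσ0.le)
      simpa using h2.neg
    have := integral_Ioi_of_hasDerivAt_of_tendsto hcont0 hder hu'int.neg htop
    rw [this]
    show (0:ℝ) - -(u 0) = r⁻¹
    rw [show u 0 = (Real.sqrt (r ^ 2 + (0:ℝ) ^ 2))⁻¹ from rfl,
      show r ^ 2 + (0:ℝ) ^ 2 = r ^ 2 by ring, Real.sqrt_sq hr.le]
    ring
  have hSabs : |S| ≤ r⁻¹ := by
    calc |S| ≤ ∫ x in Ioi (0:ℝ), |u' x * besselJ 0 x| := by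
          rw [hS_def, ← Real.norm_eq_abs]
          exact (MeasureTheory.norm_integral_le_integral_norm _).trans
            (le_of_eq (by simp only [Real.norm_eq_abs]))
      _ ≤ ∫ x in Ioi (0:ℝ), -(u' x) := by
          apply setIntegral_mono_on hu'vint.abs hu'int.neg measurableSet_Ioi
          intro x hx
          calc |u' x * besselJ 0 x| = |u' x| * |besselJ 0 x| := abs_mul _ _
            _ ≤ |u' x| * 1 := mul_le_mul_of_nonneg_left (abs_besselJ_le_one 0 x) (abs_nonneg _)
            _ = -(u' x) := by rw [mul_one, hu'neg x (le_of_lt hx)]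
      _ = r⁻¹ := hminusu'
  have hval : (∫ σ in Ioi (0:ℝ), f σ) = -r⁻¹ - S := by
    rw [hfeq, hibp]
    ring
  have hrinv : (0:ℝ) < r⁻¹ := inv_pos.2 hr
  have hSle := abs_le.mp hSabs
  have bound1 : (∫ σ in Ioi (0:ℝ), f σ) ≤ 2 / r := by
    rw [hval, div_eq_mul_inv]
    linarith
  have habs2 : |∫ σ in Ioi (0:ℝ), f σ| ≤ 2 / r := by
    rw [hval, div_eq_mul_inv, abs_le]
    constructor <;> linarith
  -- uniform bound
  have hunif : |∫ σ in Ioi (0:ℝ), f σ| ≤ 11 := by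
    have h1 : |∫ σ in Ioi (0:ℝ), f σ| ≤ ∫ σ in Ioi (0:ℝ), |f σ| := by
      rw [← Real.norm_eq_abs]
      exact (MeasureTheory.norm_integral_le_integral_norm _).trans
        (le_of_eq (by simp only [Real.norm_eq_abs]))
    have hint1 : IntegrableOn (fun x => |f x|) (Ioc 0 1) :=
      IntegrableOn.mono_set hfint.abs Ioc_subset_Ioi_self
    have hint2 : IntegrableOn (fun x => |f x|) (Ioi 1) :=
      IntegrableOn.mono_set hfint.abs (Set.Ioi_subset_Ioi zero_le_one)
    have hsplit : (∫ σ in Ioi (0:ℝ), |f σ|)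
        = (∫ σ in Ioc (0:ℝ) 1, |f σ|) + ∫ σ in Ioi (1:ℝ), |f σ| := by
      rw [← setIntegral_union (Set.Ioc_disjoint_Ioi le_rfl) measurableSet_Ioi hint1 hint2,
        Set.Ioc_union_Ioi_eq_Ioi (by norm_num : (0:ℝ) ≤ 1)]
    have hA : (∫ σ in Ioc (0:ℝ) 1, |f σ|) ≤ 1 := by
      calc (∫ σ in Ioc (0:ℝ) 1, |f σ|) ≤ ∫ _σ in Ioc (0:ℝ) 1, (1:ℝ) := by
            apply setIntegral_mono_on hint1 (integrableOn_const (by simp))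
              measurableSet_Ioc
            intro x hx
            have hx0 : 0 < x := hx.1
            have : |f x| = |besselJ 1 x| / Real.sqrt (r ^ 2 + x ^ 2) := by
              rw [hf_def]
              exact (abs_div _ _).trans (by rw [abs_of_pos (hsqpos x)])
            rw [this, div_le_one (hsqpos x)]
            calc |besselJ 1 x| ≤ |x| := abs_besselJ_one_le x
              _ = x := abs_of_pos hx0
              _ ≤ Real.sqrt (r ^ 2 + x ^ 2) := hsq_ge x hx0.le
        _ = 1 := by simp
    have hB : (∫ σ in Ioi (1:ℝ), |f σ|) ≤ 10 := by
      have hg : IntegrableOn (fun σ : ℝ => 5 * σ ^ (-(3:ℝ)/2)) (Ioi 1) :=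
        (integrableOn_Ioi_rpow_of_lt (by norm_num) one_pos).const_mul 5
      calc (∫ σ in Ioi (1:ℝ), |f σ|) ≤ ∫ σ in Ioi (1:ℝ), 5 * σ ^ (-(3:ℝ)/2) := by
            apply setIntegral_mono_on hint2 hg measurableSet_Ioi
            intro x hx
            exact hfb x (le_of_lt hx)
        _ = 5 * ∫ σ in Ioi (1:ℝ), σ ^ (-(3:ℝ)/2) := by
            rw [MeasureTheory.integral_const_mul]
        _ ≤ 10 := by
            rw [integral_Ioi_rpow_of_lt (by norm_num) one_pos]
            rw [Real.one_rpow]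
            norm_num
    calc |∫ σ in Ioi (0:ℝ), f σ| ≤ ∫ σ in Ioi (0:ℝ), |f σ| := h1
      _ = _ + _ := hsplit
      _ ≤ 1 + 10 := add_le_add hA hB
      _ = 11 := by norm_num
  refine ⟨bound1, ?_⟩
  rcases le_or_gt r 1 with h | h
  · have h1 : (1:ℝ) ≤ r ^ (-(1:ℝ)/2) := by
      apply Real.one_le_rpow_of_pos_of_le_one_of_nonpos hr h (by norm_num)
    calc |∫ σ in Ioi (0:ℝ), f σ| ≤ 11 := hunif
      _ ≤ 11 * r ^ (-(1:ℝ)/2) := by linarith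
  · have h1 : r⁻¹ ≤ r ^ (-(1:ℝ)/2) := by
      rw [show r⁻¹ = r ^ (-(1:ℝ)) from (Real.rpow_neg_one r).symm]
      exact Real.rpow_le_rpow_of_exponent_le h.le (by norm_num)
    have h2 : 0 < r ^ (-(1:ℝ)/2) := Real.rpow_pos_of_pos hr _
    calc |∫ σ in Ioi (0:ℝ), f σ| ≤ 2 / r := habs2
      _ = 2 * r⁻¹ := by rw [div_eq_mul_inv]
      _ ≤ 11 * r ^ (-(1:ℝ)/2) := by linarith
end

section
/- For every p with 1 ≤ p < 4/3 there is a constant C_p > 0 such that for every r > 0, ( ∫_0^∞ S_B(r,t)^p dt )^{1/p} ≤ C_p r^{1/p − 3/2}; for every p with 4/3 < p < ∞ there is a constant C_p > 0 such that for every r > 0, ( ∫_0^∞ S_B(r,t)^p dt )^{1/p} ≤ C_p r^{−1/p}; and sup_{t ≥ 0} S_B(r,t) ≤ C for an absolute constant C. -/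
open Real intervalIntegral MeasureTheory Set
open scoped ENNReal NNReal

section Helpers

lemma abs_cos_sub_cos' (A B : ℝ) : |Real.cos A - Real.cos B| ≤ |A - B| := by
  rw [Real.cos_sub_cos]
  have h1 : |Real.sin ((A + B) / 2)| ≤ 1 :=
    abs_le.mpr ⟨Real.neg_one_le_sin _, Real.sin_le_one _⟩
  have h2 : |Real.sin ((A - B) / 2)| ≤ |(A - B) / 2| := Real.abs_sin_le_abs
  have h3 : |(A - B) / 2| = |A - B| / 2 := by rw [abs_div]; norm_num
  have h4 : |(-2 : ℝ) * Real.sin ((A + B) / 2) * Real.sin ((A - B) / 2)|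
      = 2 * |Real.sin ((A + B) / 2)| * |Real.sin ((A - B) / 2)| := by
    rw [abs_mul, abs_mul]; norm_num
  rw [h4]
  nlinarith [abs_nonneg (Real.sin ((A + B) / 2)), abs_nonneg (Real.sin ((A - B) / 2)),
    abs_nonneg (A - B)]

lemma sqrt_two_ge : (1.4 : ℝ) ≤ Real.sqrt 2 := by
  nlinarith [Real.sq_sqrt (by norm_num : (0:ℝ) ≤ 2), Real.sqrt_nonneg 2]

lemma sin_ge_on {s : ℝ} (h1 : Real.pi / 4 ≤ s) (h2 : s ≤ 3 * Real.pi / 4) :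
    0.7 ≤ Real.sin s := by
  have hpi := Real.pi_pos
  have key : Real.sqrt 2 / 2 ≤ Real.sin s := by
    rcases le_total s (Real.pi / 2) with h | h
    · rw [← Real.sin_pi_div_four]
      exact Real.sin_le_sin_of_le_of_le_pi_div_two (by linarith) h h1
    · rw [← Real.sin_pi_sub]
      rw [← Real.sin_pi_div_four]
      exact Real.sin_le_sin_of_le_of_le_pi_div_two (by linarith) (by linarith) (by linarith)
  linarith [sqrt_two_ge]

end Helpers

lemma besselJ_one_eq (x : ℝ) :
    besselJ 1 x = (1 / Real.pi) * ∫ s in (0:ℝ)..Real.pi, Real.cos (s + x * Real.sin s) := by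
  have h1 : ∀ s : ℝ, Complex.exp (Complex.I * (((1:ℤ) : ℂ) * (s : ℂ) + (x : ℂ) * (Real.sin s : ℂ)))
      = Complex.exp (((s + x * Real.sin s : ℝ) : ℂ) * Complex.I) := by
    intro s; congr 1; push_cast; ring
  have hcont : Continuous fun s : ℝ => Complex.exp (((s + x * Real.sin s : ℝ) : ℂ) * Complex.I) := by
    continuity
  have h2 : (∫ s in (-Real.pi)..Real.pi,
      Complex.exp (Complex.I * (((1:ℤ) : ℂ) * (s : ℂ) + (x : ℂ) * (Real.sin s : ℂ)))).re
      = ∫ s in (-Real.pi)..Real.pi, Real.cos (s + x * Real.sin s) := by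
    rw [intervalIntegral.integral_congr (fun s _ => h1 s)]
    have := (Complex.reCLM.intervalIntegral_comp_comm
      (a := -Real.pi) (b := Real.pi) (μ := volume)
      (hcont.intervalIntegrable _ _)).symm
    simp only [Complex.reCLM_apply] at this
    rw [this]
    refine intervalIntegral.integral_congr fun s _ => ?_
    exact Complex.exp_ofReal_mul_I_re _
  have h3 : (∫ s in (-Real.pi)..(0:ℝ), Real.cos (s + x * Real.sin s))
      = ∫ s in (0:ℝ)..Real.pi, Real.cos (s + x * Real.sin s) := by
    have := intervalIntegral.integral_comp_neg (a := (0:ℝ)) (b := Real.pi)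
      (f := fun s => Real.cos (s + x * Real.sin s))
    rw [neg_zero] at this
    rw [← this]
    refine intervalIntegral.integral_congr fun s _ => ?_
    show Real.cos (-s + x * Real.sin (-s)) = _
    rw [Real.sin_neg, mul_neg, ← neg_add, Real.cos_neg]
  have h4 : (∫ s in (-Real.pi)..Real.pi, Real.cos (s + x * Real.sin s))
      = 2 * ∫ s in (0:ℝ)..Real.pi, Real.cos (s + x * Real.sin s) := by
    rw [← intervalIntegral.integral_add_adjacent_intervals (a := -Real.pi) (b := 0) (c := Real.pi)
      ((Continuous.intervalIntegrable (by continuity) _ _))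
      ((Continuous.intervalIntegrable (by continuity) _ _)), h3]
    ring
  unfold besselJ
  rw [h2, h4]
  have hπ := Real.pi_ne_zero
  field_simp

lemma besselJ_one_abs_le_one (x : ℝ) : |besselJ 1 x| ≤ 1 := by
  have hpi := Real.pi_pos
  rw [besselJ_one_eq, abs_mul, abs_of_pos (by positivity : (0:ℝ) < 1 / Real.pi)]
  have h : ‖∫ s in (0:ℝ)..Real.pi, Real.cos (s + x * Real.sin s)‖ ≤ 1 * |Real.pi - 0| :=
    intervalIntegral.norm_integral_le_of_norm_le_const fun s _ => by
      rw [Real.norm_eq_abs]; exact Real.abs_cos_le_one _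
  rw [Real.norm_eq_abs] at h
  rw [sub_zero, abs_of_pos hpi] at h
  calc 1 / Real.pi * |∫ s in (0:ℝ)..Real.pi, Real.cos (s + x * Real.sin s)|
      ≤ 1 / Real.pi * Real.pi := by
        apply mul_le_mul_of_nonneg_left _ (by positivity)
        simpa using h
    _ = 1 := by field_simp

lemma besselJ_one_abs_le_linear {x : ℝ} (hx : 0 ≤ x) : |besselJ 1 x| ≤ x := by
  have hpi := Real.pi_pos
  have hgt := Real.pi_gt_three
  rw [besselJ_one_eq, abs_mul, abs_of_pos (by positivity : (0:ℝ) < 1 / Real.pi)]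
  have h0 : ∫ s in (0:ℝ)..Real.pi, Real.cos s = 0 := by
    rw [integral_cos]; simp
  have hsplit : (∫ s in (0:ℝ)..Real.pi, Real.cos (s + x * Real.sin s))
      = ∫ s in (0:ℝ)..Real.pi, (Real.cos (s + x * Real.sin s) - Real.cos s) := by
    rw [intervalIntegral.integral_sub (Continuous.intervalIntegrable (by continuity) _ _)
      (Continuous.intervalIntegrable (by continuity) _ _), h0, sub_zero]
  rw [hsplit]
  have hb : |∫ s in (0:ℝ)..Real.pi, (Real.cos (s + x * Real.sin s) - Real.cos s)|
      ≤ ∫ s in (0:ℝ)..Real.pi, x * Real.sin s := by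
    calc |∫ s in (0:ℝ)..Real.pi, (Real.cos (s + x * Real.sin s) - Real.cos s)|
        ≤ ∫ s in (0:ℝ)..Real.pi, |Real.cos (s + x * Real.sin s) - Real.cos s| :=
          intervalIntegral.abs_integral_le_integral_abs hpi.le
      _ ≤ ∫ s in (0:ℝ)..Real.pi, x * Real.sin s := by
          apply intervalIntegral.integral_mono_on hpi.le
            (Continuous.intervalIntegrable (by continuity) _ _)
            (Continuous.intervalIntegrable (by continuity) _ _)
          intro s hs
          have h1 := abs_cos_sub_cos' (s + x * Real.sin s) s
          have h2 : |s + x * Real.sin s - s| = x * Real.sin s := by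
            rw [add_sub_cancel_left, abs_mul, abs_of_nonneg hx,
              abs_of_nonneg (Real.sin_nonneg_of_nonneg_of_le_pi hs.1 hs.2)]
          rw [h2] at h1; exact h1
  have hval : (∫ s in (0:ℝ)..Real.pi, x * Real.sin s) = 2 * x := by
    rw [intervalIntegral.integral_const_mul, integral_sin]
    simp [Real.cos_pi]; ring
  rw [hval] at hb
  calc 1 / Real.pi * |∫ s in (0:ℝ)..Real.pi, (Real.cos (s + x * Real.sin s) - Real.cos s)|
      ≤ 1 / Real.pi * (2 * x) := by
        apply mul_le_mul_of_nonneg_left hb (by positivity)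
    _ ≤ x := by
        rw [div_mul_eq_mul_div, mul_comm]
        rw [div_le_iff₀ hpi]
        nlinarith
lemma oscP (x a b lam : ℝ) (hx : 0 ≤ x) (ha : 0 ≤ a) (hab : a ≤ b) (hb : b ≤ Real.pi)
    (hlam : 0 < lam) (hend : lam ≤ 1 + x * Real.cos b) :
    |∫ s in a..b, Real.cos (s + x * Real.sin s)| ≤ 3 / lam := by
  have hicc : Set.uIcc a b = Set.Icc a b := Set.uIcc_of_le hab
  have hf : ∀ s ∈ Set.Icc a b, lam ≤ 1 + x * Real.cos s := fun s hs =>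
    hend.trans (by nlinarith [Real.cos_le_cos_of_nonneg_of_le_pi (ha.trans hs.1) hb hs.2])
  have hfpos : ∀ s ∈ Set.Icc a b, 0 < 1 + x * Real.cos s := fun s hs => hlam.trans_le (hf s hs)
  have hu : ∀ s ∈ Set.Icc a b, HasDerivAt (fun s => (1 + x * Real.cos s)⁻¹)
      (x * Real.sin s / (1 + x * Real.cos s) ^ 2) s := by
    intro s hs
    have h1 : HasDerivAt (fun s => 1 + x * Real.cos s) (x * -Real.sin s) s := by
      exact ((Real.hasDerivAt_cos s).const_mul x).const_add 1
    have h2 := h1.fun_inv (ne_of_gt (hfpos s hs))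
    have e : x * Real.sin s / (1 + x * Real.cos s) ^ 2
        = -(x * -Real.sin s) / (1 + x * Real.cos s) ^ 2 := by ring
    rw [e]; exact h2
  have hv : ∀ s : ℝ, HasDerivAt (fun s => Real.sin (s + x * Real.sin s))
      (Real.cos (s + x * Real.sin s) * (1 + x * Real.cos s)) s := by
    intro s
    have h1 : HasDerivAt (fun s : ℝ => s + x * Real.sin s) (1 + x * Real.cos s) s :=
      (hasDerivAt_id s).add ((Real.hasDerivAt_sin s).const_mul x)
    exact (Real.hasDerivAt_sin _).comp s h1
  have hcont_u' : ContinuousOn (fun s => x * Real.sin s / (1 + x * Real.cos s) ^ 2)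
      (Set.Icc a b) := by
    apply ContinuousOn.div (by fun_prop) (by fun_prop)
    intro s hs
    exact pow_ne_zero _ (ne_of_gt (hfpos s hs))
  have hint_u' : IntervalIntegrable (fun s => x * Real.sin s / (1 + x * Real.cos s) ^ 2)
      volume a b := (hicc ▸ hcont_u').intervalIntegrable
  have hint_v' : IntervalIntegrable
      (fun s => Real.cos (s + x * Real.sin s) * (1 + x * Real.cos s)) volume a b :=
    Continuous.intervalIntegrable (by fun_prop) a b
  have ibp := intervalIntegral.integral_mul_deriv_eq_deriv_mul
      (u := fun s => (1 + x * Real.cos s)⁻¹) (v := fun s => Real.sin (s + x * Real.sin s))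
      (u' := fun s => x * Real.sin s / (1 + x * Real.cos s) ^ 2)
      (v' := fun s => Real.cos (s + x * Real.sin s) * (1 + x * Real.cos s))
      (fun s hs => hu s (hicc ▸ hs)) (fun s _ => hv s) hint_u' hint_v'
  have hcongr : (∫ s in a..b, Real.cos (s + x * Real.sin s))
      = ∫ s in a..b, (1 + x * Real.cos s)⁻¹ *
          (Real.cos (s + x * Real.sin s) * (1 + x * Real.cos s)) := by
    refine intervalIntegral.integral_congr fun s hs => ?_
    have h := ne_of_gt (hfpos s (hicc ▸ hs))
    field_simp
  have hftc : (∫ s in a..b, x * Real.sin s / (1 + x * Real.cos s) ^ 2)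
      = (1 + x * Real.cos b)⁻¹ - (1 + x * Real.cos a)⁻¹ := by
    have := intervalIntegral.integral_eq_sub_of_hasDerivAt
      (f := fun s => (1 + x * Real.cos s)⁻¹)
      (f' := fun s => x * Real.sin s / (1 + x * Real.cos s) ^ 2)
      (fun s hs => hu s (hicc ▸ hs)) hint_u'
    simpa using this
  have habs : |∫ s in a..b, x * Real.sin s / (1 + x * Real.cos s) ^ 2 *
        Real.sin (s + x * Real.sin s)|
      ≤ ∫ s in a..b, x * Real.sin s / (1 + x * Real.cos s) ^ 2 := by
    calc |∫ s in a..b, x * Real.sin s / (1 + x * Real.cos s) ^ 2 * Real.sin (s + x * Real.sin s)|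
        ≤ ∫ s in a..b, |x * Real.sin s / (1 + x * Real.cos s) ^ 2 * Real.sin (s + x * Real.sin s)| :=
          intervalIntegral.abs_integral_le_integral_abs hab
      _ ≤ ∫ s in a..b, x * Real.sin s / (1 + x * Real.cos s) ^ 2 := by
          apply intervalIntegral.integral_mono_on hab
            (IntervalIntegrable.abs (by
              exact hint_u'.mul_continuousOn (Continuous.continuousOn (by fun_prop))))
            hint_u'
          intro s hs
          have hs0 : 0 ≤ x * Real.sin s / (1 + x * Real.cos s) ^ 2 := by
            have hsin : 0 ≤ Real.sin s :=
              Real.sin_nonneg_of_nonneg_of_le_pi (ha.trans hs.1) (hs.2.trans hb)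
            positivity
          rw [abs_mul, abs_of_nonneg hs0]
          calc (x * Real.sin s / (1 + x * Real.cos s) ^ 2) * |Real.sin (s + x * Real.sin s)|
              ≤ (x * Real.sin s / (1 + x * Real.cos s) ^ 2) * 1 :=
                mul_le_mul_of_nonneg_left (Real.abs_sin_le_one _) hs0
            _ = x * Real.sin s / (1 + x * Real.cos s) ^ 2 := mul_one _
  -- endpoint bounds
  have hua : (1 + x * Real.cos a)⁻¹ ≤ 1 / lam := by
    rw [one_div]
    exact inv_anti₀ hlam (hf a ⟨le_refl a, hab⟩)
  have hub : (1 + x * Real.cos b)⁻¹ ≤ 1 / lam := by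
    rw [one_div]
    exact inv_anti₀ hlam (hf b ⟨hab, le_refl b⟩)
  have hua0 : 0 < (1 + x * Real.cos a)⁻¹ := inv_pos.mpr (hfpos a ⟨le_refl a, hab⟩)
  have hub0 : 0 < (1 + x * Real.cos b)⁻¹ := inv_pos.mpr (hfpos b ⟨hab, le_refl b⟩)
  rw [hcongr, ibp]
  rw [hftc] at habs
  have h1 : |(1 + x * Real.cos b)⁻¹ * Real.sin (b + x * Real.sin b)| ≤ 1 / lam := by
    rw [abs_mul, abs_of_pos hub0]
    calc (1 + x * Real.cos b)⁻¹ * |Real.sin (b + x * Real.sin b)|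
        ≤ (1 + x * Real.cos b)⁻¹ * 1 := mul_le_mul_of_nonneg_left (Real.abs_sin_le_one _) hub0.le
      _ ≤ 1 / lam := by rw [mul_one]; exact hub
  have h2 : |(1 + x * Real.cos a)⁻¹ * Real.sin (a + x * Real.sin a)| ≤ 1 / lam := by
    rw [abs_mul, abs_of_pos hua0]
    calc (1 + x * Real.cos a)⁻¹ * |Real.sin (a + x * Real.sin a)|
        ≤ (1 + x * Real.cos a)⁻¹ * 1 := mul_le_mul_of_nonneg_left (Real.abs_sin_le_one _) hua0.le
      _ ≤ 1 / lam := by rw [mul_one]; exact hua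
  have h3 : |∫ s in a..b, x * Real.sin s / (1 + x * Real.cos s) ^ 2 *
      Real.sin (s + x * Real.sin s)| ≤ 1 / lam := by
    refine habs.trans ?_
    linarith
  have htri := abs_sub (((1 + x * Real.cos b)⁻¹ * Real.sin (b + x * Real.sin b)) -
      ((1 + x * Real.cos a)⁻¹ * Real.sin (a + x * Real.sin a)))
      (∫ s in a..b, x * Real.sin s / (1 + x * Real.cos s) ^ 2 * Real.sin (s + x * Real.sin s))
  have htri2 := abs_sub ((1 + x * Real.cos b)⁻¹ * Real.sin (b + x * Real.sin b))
      ((1 + x * Real.cos a)⁻¹ * Real.sin (a + x * Real.sin a))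
  have : 3 / lam = 1 / lam + 1 / lam + 1 / lam := by ring
  rw [this]
  calc |(1 + x * Real.cos b)⁻¹ * Real.sin (b + x * Real.sin b) -
        (1 + x * Real.cos a)⁻¹ * Real.sin (a + x * Real.sin a) -
        ∫ s in a..b, x * Real.sin s / (1 + x * Real.cos s) ^ 2 * Real.sin (s + x * Real.sin s)|
      ≤ |(1 + x * Real.cos b)⁻¹ * Real.sin (b + x * Real.sin b) -
        (1 + x * Real.cos a)⁻¹ * Real.sin (a + x * Real.sin a)| +
        |∫ s in a..b, x * Real.sin s / (1 + x * Real.cos s) ^ 2 *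
          Real.sin (s + x * Real.sin s)| := htri
    _ ≤ (|(1 + x * Real.cos b)⁻¹ * Real.sin (b + x * Real.sin b)| +
        |(1 + x * Real.cos a)⁻¹ * Real.sin (a + x * Real.sin a)|) +
        |∫ s in a..b, x * Real.sin s / (1 + x * Real.cos s) ^ 2 *
          Real.sin (s + x * Real.sin s)| := by linarith
    _ ≤ 1 / lam + 1 / lam + 1 / lam := by linarith
lemma oscN (x a b lam : ℝ) (hx : 0 ≤ x) (ha : 0 ≤ a) (hab : a ≤ b) (hb : b ≤ Real.pi)
    (hlam : 0 < lam) (hend : 1 + x * Real.cos a ≤ -lam) :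
    |∫ s in a..b, Real.cos (s + x * Real.sin s)| ≤ 3 / lam := by
  have hicc : Set.uIcc a b = Set.Icc a b := Set.uIcc_of_le hab
  have hf : ∀ s ∈ Set.Icc a b, 1 + x * Real.cos s ≤ -lam := fun s hs => by
    nlinarith [Real.cos_le_cos_of_nonneg_of_le_pi ha (hs.2.trans hb) hs.1]
  have hfneg : ∀ s ∈ Set.Icc a b, 1 + x * Real.cos s < 0 := fun s hs =>
    (hf s hs).trans_lt (by linarith)
  have hu : ∀ s ∈ Set.Icc a b, HasDerivAt (fun s => (1 + x * Real.cos s)⁻¹)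
      (x * Real.sin s / (1 + x * Real.cos s) ^ 2) s := by
    intro s hs
    have h1 : HasDerivAt (fun s => 1 + x * Real.cos s) (x * -Real.sin s) s := by
      exact ((Real.hasDerivAt_cos s).const_mul x).const_add 1
    have h2 := h1.fun_inv (ne_of_lt (hfneg s hs))
    have e : x * Real.sin s / (1 + x * Real.cos s) ^ 2
        = -(x * -Real.sin s) / (1 + x * Real.cos s) ^ 2 := by ring
    rw [e]; exact h2
  have hv : ∀ s : ℝ, HasDerivAt (fun s => Real.sin (s + x * Real.sin s))
      (Real.cos (s + x * Real.sin s) * (1 + x * Real.cos s)) s := by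
    intro s
    have h1 : HasDerivAt (fun s : ℝ => s + x * Real.sin s) (1 + x * Real.cos s) s :=
      (hasDerivAt_id s).add ((Real.hasDerivAt_sin s).const_mul x)
    exact (Real.hasDerivAt_sin _).comp s h1
  have hcont_u' : ContinuousOn (fun s => x * Real.sin s / (1 + x * Real.cos s) ^ 2)
      (Set.Icc a b) := by
    apply ContinuousOn.div (by fun_prop) (by fun_prop)
    intro s hs
    exact pow_ne_zero _ (ne_of_lt (hfneg s hs))
  have hint_u' : IntervalIntegrable (fun s => x * Real.sin s / (1 + x * Real.cos s) ^ 2)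
      volume a b := (hicc ▸ hcont_u').intervalIntegrable
  have hint_v' : IntervalIntegrable
      (fun s => Real.cos (s + x * Real.sin s) * (1 + x * Real.cos s)) volume a b :=
    Continuous.intervalIntegrable (by fun_prop) a b
  have ibp := intervalIntegral.integral_mul_deriv_eq_deriv_mul
      (u := fun s => (1 + x * Real.cos s)⁻¹) (v := fun s => Real.sin (s + x * Real.sin s))
      (u' := fun s => x * Real.sin s / (1 + x * Real.cos s) ^ 2)
      (v' := fun s => Real.cos (s + x * Real.sin s) * (1 + x * Real.cos s))
      (fun s hs => hu s (hicc ▸ hs)) (fun s _ => hv s) hint_u' hint_v'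
  have hcongr : (∫ s in a..b, Real.cos (s + x * Real.sin s))
      = ∫ s in a..b, (1 + x * Real.cos s)⁻¹ *
          (Real.cos (s + x * Real.sin s) * (1 + x * Real.cos s)) := by
    refine intervalIntegral.integral_congr fun s hs => ?_
    have h := ne_of_lt (hfneg s (hicc ▸ hs))
    field_simp
  have hftc : (∫ s in a..b, x * Real.sin s / (1 + x * Real.cos s) ^ 2)
      = (1 + x * Real.cos b)⁻¹ - (1 + x * Real.cos a)⁻¹ := by
    have := intervalIntegral.integral_eq_sub_of_hasDerivAt
      (f := fun s => (1 + x * Real.cos s)⁻¹)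
      (f' := fun s => x * Real.sin s / (1 + x * Real.cos s) ^ 2)
      (fun s hs => hu s (hicc ▸ hs)) hint_u'
    simpa using this
  have habs : |∫ s in a..b, x * Real.sin s / (1 + x * Real.cos s) ^ 2 *
        Real.sin (s + x * Real.sin s)|
      ≤ ∫ s in a..b, x * Real.sin s / (1 + x * Real.cos s) ^ 2 := by
    calc |∫ s in a..b, x * Real.sin s / (1 + x * Real.cos s) ^ 2 * Real.sin (s + x * Real.sin s)|
        ≤ ∫ s in a..b, |x * Real.sin s / (1 + x * Real.cos s) ^ 2 * Real.sin (s + x * Real.sin s)| :=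
          intervalIntegral.abs_integral_le_integral_abs hab
      _ ≤ ∫ s in a..b, x * Real.sin s / (1 + x * Real.cos s) ^ 2 := by
          apply intervalIntegral.integral_mono_on hab
            (IntervalIntegrable.abs (by
              exact hint_u'.mul_continuousOn (Continuous.continuousOn (by fun_prop))))
            hint_u'
          intro s hs
          have hs0 : 0 ≤ x * Real.sin s / (1 + x * Real.cos s) ^ 2 := by
            have hsin : 0 ≤ Real.sin s :=
              Real.sin_nonneg_of_nonneg_of_le_pi (ha.trans hs.1) (hs.2.trans hb)
            positivity
          rw [abs_mul, abs_of_nonneg hs0]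
          calc (x * Real.sin s / (1 + x * Real.cos s) ^ 2) * |Real.sin (s + x * Real.sin s)|
              ≤ (x * Real.sin s / (1 + x * Real.cos s) ^ 2) * 1 :=
                mul_le_mul_of_nonneg_left (Real.abs_sin_le_one _) hs0
            _ = x * Real.sin s / (1 + x * Real.cos s) ^ 2 := mul_one _
  have huaabs : |(1 + x * Real.cos a)⁻¹| ≤ 1 / lam := by
    rw [abs_inv, one_div]
    apply inv_anti₀ hlam
    rw [abs_of_neg (hfneg a ⟨le_refl a, hab⟩)]
    linarith [hf a ⟨le_refl a, hab⟩]
  have hubabs : |(1 + x * Real.cos b)⁻¹| ≤ 1 / lam := by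
    rw [abs_inv, one_div]
    apply inv_anti₀ hlam
    rw [abs_of_neg (hfneg b ⟨hab, le_refl b⟩)]
    linarith [hf b ⟨hab, le_refl b⟩]
  have hub0 : (1 + x * Real.cos b)⁻¹ < 0 := inv_neg''.mpr (hfneg b ⟨hab, le_refl b⟩)
  rw [hcongr, ibp]
  rw [hftc] at habs
  have h1 : |(1 + x * Real.cos b)⁻¹ * Real.sin (b + x * Real.sin b)| ≤ 1 / lam := by
    rw [abs_mul]
    calc |(1 + x * Real.cos b)⁻¹| * |Real.sin (b + x * Real.sin b)|
        ≤ |(1 + x * Real.cos b)⁻¹| * 1 :=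
          mul_le_mul_of_nonneg_left (Real.abs_sin_le_one _) (abs_nonneg _)
      _ ≤ 1 / lam := by rw [mul_one]; exact hubabs
  have h2 : |(1 + x * Real.cos a)⁻¹ * Real.sin (a + x * Real.sin a)| ≤ 1 / lam := by
    rw [abs_mul]
    calc |(1 + x * Real.cos a)⁻¹| * |Real.sin (a + x * Real.sin a)|
        ≤ |(1 + x * Real.cos a)⁻¹| * 1 :=
          mul_le_mul_of_nonneg_left (Real.abs_sin_le_one _) (abs_nonneg _)
      _ ≤ 1 / lam := by rw [mul_one]; exact huaabs
  have h3 : |∫ s in a..b, x * Real.sin s / (1 + x * Real.cos s) ^ 2 *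
      Real.sin (s + x * Real.sin s)| ≤ 1 / lam := by
    refine habs.trans ?_
    have hua' : -(1 + x * Real.cos a)⁻¹ ≤ 1 / lam :=
      (neg_le_abs _).trans huaabs
    linarith
  have htri := abs_sub (((1 + x * Real.cos b)⁻¹ * Real.sin (b + x * Real.sin b)) -
      ((1 + x * Real.cos a)⁻¹ * Real.sin (a + x * Real.sin a)))
      (∫ s in a..b, x * Real.sin s / (1 + x * Real.cos s) ^ 2 * Real.sin (s + x * Real.sin s))
  have htri2 := abs_sub ((1 + x * Real.cos b)⁻¹ * Real.sin (b + x * Real.sin b))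
      ((1 + x * Real.cos a)⁻¹ * Real.sin (a + x * Real.sin a))
  have hsum : 3 / lam = 1 / lam + 1 / lam + 1 / lam := by ring
  rw [hsum]
  calc |(1 + x * Real.cos b)⁻¹ * Real.sin (b + x * Real.sin b) -
        (1 + x * Real.cos a)⁻¹ * Real.sin (a + x * Real.sin a) -
        ∫ s in a..b, x * Real.sin s / (1 + x * Real.cos s) ^ 2 * Real.sin (s + x * Real.sin s)|
      ≤ |(1 + x * Real.cos b)⁻¹ * Real.sin (b + x * Real.sin b) -
        (1 + x * Real.cos a)⁻¹ * Real.sin (a + x * Real.sin a)| +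
        |∫ s in a..b, x * Real.sin s / (1 + x * Real.cos s) ^ 2 *
          Real.sin (s + x * Real.sin s)| := htri
    _ ≤ (|(1 + x * Real.cos b)⁻¹ * Real.sin (b + x * Real.sin b)| +
        |(1 + x * Real.cos a)⁻¹ * Real.sin (a + x * Real.sin a)|) +
        |∫ s in a..b, x * Real.sin s / (1 + x * Real.cos s) ^ 2 *
          Real.sin (s + x * Real.sin s)| := by linarith
    _ ≤ 1 / lam + 1 / lam + 1 / lam := by linarith
set_option maxHeartbeats 1000000 in
lemma decay_bound {x : ℝ} (hx : 16 ≤ x) :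
    |∫ s in (0:ℝ)..Real.pi, Real.cos (s + x * Real.sin s)| ≤ 17 / Real.sqrt x := by
  have hpi := Real.pi_pos
  have hpi3 := Real.pi_gt_three
  have hx0 : (0:ℝ) < x := by linarith
  have hsx : (4:ℝ) ≤ Real.sqrt x := by
    have h16 : (4:ℝ) = Real.sqrt 16 := by
      rw [show (16:ℝ) = 4 ^ 2 by norm_num, Real.sqrt_sq (by norm_num)]
    rw [h16]; exact Real.sqrt_le_sqrt hx
  have hsx0 : (0:ℝ) < Real.sqrt x := by linarith
  have hsq : Real.sqrt x * Real.sqrt x = x := Real.mul_self_sqrt hx0.le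
  set δ : ℝ := (Real.sqrt x)⁻¹ with hδdef
  have hδ0 : 0 < δ := by positivity
  have hδ4 : δ ≤ 1 / 4 := by
    rw [hδdef, inv_le_comm₀ hsx0 (by norm_num)]
    simpa using hsx
  have hxδ : x * δ = Real.sqrt x := by
    rw [hδdef, ← div_eq_mul_inv, Real.div_sqrt]
  set s0 : ℝ := Real.arccos (-(1/x)) with hs0def
  have hm1 : (-1 : ℝ) ≤ -(1/x) := by
    have : 1/x ≤ 1 := by rw [div_le_one hx0]; linarith
    linarith
  have hm2 : -(1/x) ≤ 1 := by
    have : 0 < 1/x := by positivity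
    linarith
  have hcos0 : Real.cos s0 = -(1/x) := Real.cos_arccos hm1 hm2
  have hs00 : 0 ≤ s0 := Real.arccos_nonneg _
  have hs0pi : s0 ≤ Real.pi := Real.arccos_le_pi _
  have hs0l : Real.pi / 2 ≤ s0 := by
    by_contra h
    push_neg at h
    have hpos : 0 < Real.cos s0 :=
      Real.cos_pos_of_mem_Ioo ⟨by linarith, h⟩
    rw [hcos0] at hpos
    have : 0 < 1/x := by positivity
    linarith
  have hs0u : s0 ≤ Real.pi / 2 + 1/8 := by
    by_contra h
    push_neg at h
    have hlt : Real.cos s0 < Real.cos (Real.pi / 2 + 1/8) :=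
      Real.cos_lt_cos_of_nonneg_of_le_pi (by linarith) hs0pi h
    rw [show Real.pi / 2 + 1/8 = 1/8 + Real.pi/2 by ring, Real.cos_add_pi_div_two, hcos0] at hlt
    have hsin : (1:ℝ)/8 - (1/8)^3 / 4 < Real.sin (1/8) :=
      lt_of_le_of_lt (by norm_num) (Real.sin_gt_sub_cube (x := 1/8) (by norm_num))
    have hxx : 1/x ≤ 1/16 := by
      rw [div_le_div_iff₀ hx0 (by norm_num)]; linarith
    norm_num at hsin hlt ⊢
    have hxx' : x⁻¹ ≤ 1/16 := by rw [inv_eq_one_div]; exact hxx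
    linarith
  have h12 : Real.pi / 4 ≤ s0 - δ := by linarith
  have h34 : s0 + δ ≤ 3 * Real.pi / 4 := by linarith
  -- cos decrement estimate
  have hsin_int : ∀ a b : ℝ, Real.pi/4 ≤ a → a ≤ b → b ≤ 3*Real.pi/4 →
      0.7 * (b - a) ≤ Real.cos a - Real.cos b := by
    intro a b h1 h2 h3
    have hval : ∫ u in a..b, Real.sin u = Real.cos a - Real.cos b := integral_sin
    rw [← hval]
    have hconst : (∫ u in a..b, (0.7 : ℝ)) = 0.7 * (b - a) := by
      rw [intervalIntegral.integral_const, smul_eq_mul, mul_comm]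
    rw [← hconst]
    apply intervalIntegral.integral_mono_on h2
      (intervalIntegrable_const)
      (Continuous.intervalIntegrable Real.continuous_sin _ _)
    intro u hu
    exact sin_ge_on (h1.trans hu.1) (hu.2.trans h3)
  have hzero : 1 + x * Real.cos s0 = 0 := by
    rw [hcos0]; field_simp; norm_num
  -- piece bounds
  have hci : ∀ a b : ℝ, IntervalIntegrable (fun s => Real.cos (s + x * Real.sin s)) volume a b :=
    fun a b => Continuous.intervalIntegrable (by fun_prop) a b
  have B1 : |∫ s in (0:ℝ)..(Real.pi/4), Real.cos (s + x * Real.sin s)| ≤ 3 / (x/2) := by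
    apply oscP x 0 (Real.pi/4) (x/2) hx0.le le_rfl (by linarith) (by linarith) (by linarith)
    rw [Real.cos_pi_div_four]
    have hmul : x * 1.4 ≤ x * Real.sqrt 2 := mul_le_mul_of_nonneg_left sqrt_two_ge hx0.le
    linarith
  have B2 : |∫ s in (Real.pi/4)..(s0 - δ), Real.cos (s + x * Real.sin s)|
      ≤ 3 / (Real.sqrt x / 2) := by
    apply oscP x (Real.pi/4) (s0 - δ) (Real.sqrt x / 2) hx0.le (by linarith) h12 (by linarith)
      (by linarith)
    have hdec := hsin_int (s0 - δ) s0 h12 (by linarith) (by linarith)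
    have : 1 + x * Real.cos (s0 - δ) = (1 + x * Real.cos s0)
        + x * (Real.cos (s0 - δ) - Real.cos s0) := by ring
    rw [this, hzero, zero_add]
    have hdec' : 0.7 * δ ≤ Real.cos (s0 - δ) - Real.cos s0 := by linarith
    have hdec2 := mul_le_mul_of_nonneg_left hdec' hx0.le
    calc Real.sqrt x / 2 ≤ 0.7 * (x * δ) := by rw [hxδ]; linarith
      _ ≤ x * (Real.cos (s0 - δ) - Real.cos s0) := by linarith
  have B3 : |∫ s in (s0 - δ)..(s0 + δ), Real.cos (s + x * Real.sin s)| ≤ 2 * δ := by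
    have h := intervalIntegral.norm_integral_le_of_norm_le_const
      (a := s0 - δ) (b := s0 + δ) (C := 1)
      (f := fun s => Real.cos (s + x * Real.sin s))
      (fun s _ => by rw [Real.norm_eq_abs]; exact Real.abs_cos_le_one _)
    rw [Real.norm_eq_abs] at h
    have h2 : |s0 + δ - (s0 - δ)| = 2 * δ := by
      rw [abs_of_nonneg (by linarith)]; ring
    rw [h2, one_mul] at h
    exact h
  have B4 : |∫ s in (s0 + δ)..(3*Real.pi/4), Real.cos (s + x * Real.sin s)|
      ≤ 3 / (Real.sqrt x / 2) := by
    apply oscN x (s0 + δ) (3*Real.pi/4) (Real.sqrt x / 2) hx0.le (by linarith) h34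
      (by linarith) (by linarith)
    have hdec := hsin_int s0 (s0 + δ) (by linarith) (by linarith) h34
    have : 1 + x * Real.cos (s0 + δ) = (1 + x * Real.cos s0)
        - x * (Real.cos s0 - Real.cos (s0 + δ)) := by ring
    rw [this, hzero, zero_sub]
    have hdec' : 0.7 * δ ≤ Real.cos s0 - Real.cos (s0 + δ) := by linarith
    have hdec2 := mul_le_mul_of_nonneg_left hdec' hx0.le
    have : Real.sqrt x / 2 ≤ x * (Real.cos s0 - Real.cos (s0 + δ)) := by
      calc Real.sqrt x / 2 ≤ 0.7 * (x * δ) := by rw [hxδ]; linarith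
        _ ≤ x * (Real.cos s0 - Real.cos (s0 + δ)) := by linarith
    linarith
  have B5 : |∫ s in (3*Real.pi/4)..Real.pi, Real.cos (s + x * Real.sin s)| ≤ 3 / (x/2) := by
    apply oscN x (3*Real.pi/4) Real.pi (x/2) hx0.le (by linarith) (by linarith) le_rfl
      (by linarith)
    have : Real.cos (3*Real.pi/4) = -(Real.sqrt 2 / 2) := by
      rw [show 3*Real.pi/4 = Real.pi - Real.pi/4 by ring, Real.cos_pi_sub,
        Real.cos_pi_div_four]
    rw [this]
    have hmul : x * 1.4 ≤ x * Real.sqrt 2 := mul_le_mul_of_nonneg_left sqrt_two_ge hx0.le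
    linarith
  -- assemble
  have A4 : (∫ s in (s0 + δ)..Real.pi, Real.cos (s + x * Real.sin s))
      = (∫ s in (s0 + δ)..(3*Real.pi/4), Real.cos (s + x * Real.sin s))
      + ∫ s in (3*Real.pi/4)..Real.pi, Real.cos (s + x * Real.sin s) :=
    (intervalIntegral.integral_add_adjacent_intervals (hci _ _) (hci _ _)).symm
  have A3 : (∫ s in (s0 - δ)..Real.pi, Real.cos (s + x * Real.sin s))
      = (∫ s in (s0 - δ)..(s0 + δ), Real.cos (s + x * Real.sin s))
      + ∫ s in (s0 + δ)..Real.pi, Real.cos (s + x * Real.sin s) :=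
    (intervalIntegral.integral_add_adjacent_intervals (hci _ _) (hci _ _)).symm
  have A2 : (∫ s in (Real.pi/4)..Real.pi, Real.cos (s + x * Real.sin s))
      = (∫ s in (Real.pi/4)..(s0 - δ), Real.cos (s + x * Real.sin s))
      + ∫ s in (s0 - δ)..Real.pi, Real.cos (s + x * Real.sin s) :=
    (intervalIntegral.integral_add_adjacent_intervals (hci _ _) (hci _ _)).symm
  have A1 : (∫ s in (0:ℝ)..Real.pi, Real.cos (s + x * Real.sin s))
      = (∫ s in (0:ℝ)..(Real.pi/4), Real.cos (s + x * Real.sin s))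
      + ∫ s in (Real.pi/4)..Real.pi, Real.cos (s + x * Real.sin s) :=
    (intervalIntegral.integral_add_adjacent_intervals (hci _ _) (hci _ _)).symm
  set I1 := ∫ s in (0:ℝ)..(Real.pi/4), Real.cos (s + x * Real.sin s) with hI1
  set I2 := ∫ s in (Real.pi/4)..(s0 - δ), Real.cos (s + x * Real.sin s) with hI2
  set I3 := ∫ s in (s0 - δ)..(s0 + δ), Real.cos (s + x * Real.sin s) with hI3
  set I4 := ∫ s in (s0 + δ)..(3*Real.pi/4), Real.cos (s + x * Real.sin s) with hI4
  set I5 := ∫ s in (3*Real.pi/4)..Real.pi, Real.cos (s + x * Real.sin s) with hI5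
  rw [A1, A2, A3, A4]
  have hsmall : 3 / (x/2) ≤ (3:ℝ)/2 / Real.sqrt x := by
    rw [div_le_div_iff₀ (by positivity) hsx0]
    nlinarith
  have h6 : 3 / (Real.sqrt x / 2) = 6 / Real.sqrt x := by
    rw [div_div_eq_mul_div]
    norm_num
  have h2δ : 2 * δ = 2 / Real.sqrt x := by
    rw [hδdef, div_eq_mul_inv]
  have t1 := abs_add_le I1 (I2 + (I3 + (I4 + I5)))
  have t2 := abs_add_le I2 (I3 + (I4 + I5))
  have t3 := abs_add_le I3 (I4 + I5)
  have t4 := abs_add_le I4 I5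
  have hB1 : |I1| ≤ (3:ℝ)/2 / Real.sqrt x := B1.trans hsmall
  have hB5 : |I5| ≤ (3:ℝ)/2 / Real.sqrt x := B5.trans hsmall
  have hB2 : |I2| ≤ 6 / Real.sqrt x := h6 ▸ B2
  have hB4 : |I4| ≤ 6 / Real.sqrt x := h6 ▸ B4
  have hB3 : |I3| ≤ 2 / Real.sqrt x := h2δ ▸ B3
  have hfin : (3:ℝ)/2 / Real.sqrt x + 6 / Real.sqrt x + 2 / Real.sqrt x
      + 6 / Real.sqrt x + (3:ℝ)/2 / Real.sqrt x = 17 / Real.sqrt x := by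
    field_simp
    ring
  linarith
noncomputable def SB (r t : ℝ) : ℝ :=
  (1 / (4 * Real.pi)) *
    (if r ≤ t then
      (if t = r then 1 / 2
       else besselJ 1 (Real.sqrt (t ^ 2 - r ^ 2)) / Real.sqrt (t ^ 2 - r ^ 2))
     else 0)

lemma besselJ_decay_s11 {z : ℝ} (hz : 16 ≤ z) : |besselJ 1 z| ≤ 6 / Real.sqrt z := by
  have hpi := Real.pi_gt_three
  have hz0 : (0:ℝ) < z := by linarith
  have hsz : (0:ℝ) < Real.sqrt z := Real.sqrt_pos.mpr hz0
  rw [besselJ_one_eq, abs_mul, abs_of_pos (by positivity : (0:ℝ) < 1 / Real.pi)]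
  calc 1 / Real.pi * |∫ s in (0:ℝ)..Real.pi, Real.cos (s + z * Real.sin s)|
      ≤ 1 / Real.pi * (17 / Real.sqrt z) := by
        apply mul_le_mul_of_nonneg_left (decay_bound hz) (by positivity)
    _ ≤ 6 / Real.sqrt z := by
        rw [← mul_div_assoc, div_le_div_iff₀ (by positivity) hsz]
        have h17 : (1:ℝ) / Real.pi * 17 ≤ 6 := by
          rw [div_mul_eq_mul_div, div_le_iff₀ (by linarith)]
          linarith
        nlinarith

lemma SB_abs_le_one {r t : ℝ} (hr : 0 < r) : |SB r t| ≤ 1 := by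
  have hpi := Real.pi_gt_three
  have hpi0 : (0:ℝ) < Real.pi := by linarith
  unfold SB
  rcases lt_or_ge t r with h | h
  · rw [if_neg (not_le.mpr h), mul_zero, abs_zero]; norm_num
  rcases eq_or_lt_of_le h with he | hlt
  · rw [if_pos h, if_pos he.symm, abs_mul]
    rw [abs_of_pos (by positivity : (0:ℝ) < 1 / (4 * Real.pi)),
      abs_of_pos (by norm_num : (0:ℝ) < (1:ℝ)/2)]
    rw [div_mul_div_comm, one_mul]
    rw [div_le_one (by positivity)]
    linarith
  · have hw : 0 < t ^ 2 - r ^ 2 := by nlinarith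
    have hz0 : 0 < Real.sqrt (t ^ 2 - r ^ 2) := Real.sqrt_pos.mpr hw
    rw [if_pos h, if_neg (ne_of_gt hlt), abs_mul,
      abs_of_pos (by positivity : (0:ℝ) < 1 / (4 * Real.pi)), abs_div,
      abs_of_pos hz0]
    have hlin : |besselJ 1 (Real.sqrt (t ^ 2 - r ^ 2))| ≤ Real.sqrt (t ^ 2 - r ^ 2) :=
      besselJ_one_abs_le_linear (Real.sqrt_nonneg _)
    have hd1 : |besselJ 1 (Real.sqrt (t ^ 2 - r ^ 2))| / Real.sqrt (t ^ 2 - r ^ 2) ≤ 1 :=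
      (div_le_one hz0).mpr hlin
    calc 1 / (4 * Real.pi) * (|besselJ 1 (Real.sqrt (t ^ 2 - r ^ 2))| / Real.sqrt (t ^ 2 - r ^ 2))
        ≤ 1 / (4 * Real.pi) * 1 := mul_le_mul_of_nonneg_left hd1 (by positivity)
      _ ≤ 1 := by rw [mul_one, div_le_one (by positivity)]; linarith

lemma SB_pointwise {r t : ℝ} (hr : 0 < r) (hlt : r < t) :
    |SB r t| ≤ min 1 ((t ^ 2 - r ^ 2) ^ (-(3/4) : ℝ)) := by
  have hpi := Real.pi_gt_three
  have hpi0 : (0:ℝ) < Real.pi := by linarith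
  have hw : 0 < t ^ 2 - r ^ 2 := by nlinarith
  set w : ℝ := t ^ 2 - r ^ 2 with hwdef
  set z : ℝ := Real.sqrt w with hzdef
  have hz0 : 0 < z := Real.sqrt_pos.mpr hw
  have hsz0 : 0 < Real.sqrt z := Real.sqrt_pos.mpr hz0
  have habs : |SB r t| = 1 / (4 * Real.pi) * (|besselJ 1 z| / z) := by
    unfold SB
    rw [if_pos hlt.le, if_neg (ne_of_gt hlt), abs_mul,
      abs_of_pos (by positivity : (0:ℝ) < 1 / (4 * Real.pi)), abs_div, abs_of_pos hz0]
  have hJs : |besselJ 1 z| * Real.sqrt z ≤ 4 * Real.pi := by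
    rcases le_total 16 z with h16 | h16
    · have hd := besselJ_decay_s11 h16
      have h1 : |besselJ 1 z| * Real.sqrt z ≤ (6 / Real.sqrt z) * Real.sqrt z :=
        mul_le_mul_of_nonneg_right hd (Real.sqrt_nonneg _)
      rw [div_mul_cancel₀ _ hsz0.ne'] at h1
      linarith
    · have h4 : Real.sqrt z ≤ 4 := by
        have : (4:ℝ) = Real.sqrt 16 := by
          rw [show (16:ℝ) = 4 ^ 2 by norm_num, Real.sqrt_sq (by norm_num)]
        rw [this]
        exact Real.sqrt_le_sqrt h16
      have h1 : |besselJ 1 z| * Real.sqrt z ≤ 1 * 4 :=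
        mul_le_mul (besselJ_one_abs_le_one z) h4 (Real.sqrt_nonneg _) (by norm_num)
      linarith
  have hkey : 1 / (4 * Real.pi) * (|besselJ 1 z| / z) ≤ (z * Real.sqrt z)⁻¹ := by
    have heq : 1 / (4 * Real.pi) * (|besselJ 1 z| / z) = |besselJ 1 z| / (4 * Real.pi * z) := by
      field_simp
    rw [heq, inv_eq_one_div, div_le_div_iff₀ (by positivity) (by positivity)]
    have := mul_le_mul_of_nonneg_right hJs hz0.le
    nlinarith
  have hz32 : w ^ (-(3/4) : ℝ) = (z * Real.sqrt z)⁻¹ := by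
    have e1 : z * Real.sqrt z = z ^ ((3:ℝ)/2) := by
      rw [Real.sqrt_eq_rpow, show (3:ℝ)/2 = 1 + 1/2 by norm_num, Real.rpow_add hz0,
        Real.rpow_one]
    have e2 : z ^ ((3:ℝ)/2) = w ^ ((3:ℝ)/4) := by
      rw [hzdef, Real.sqrt_eq_rpow, ← Real.rpow_mul hw.le]
      norm_num
    rw [show (-(3/4) : ℝ) = -((3:ℝ)/4) by norm_num, Real.rpow_neg hw.le, e1, e2]
  refine le_min (SB_abs_le_one hr) ?_
  rw [habs, hz32]
  exact hkey
lemma lint_shift_Ioi (g : ℝ → ℝ≥0∞) (r m : ℝ) :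
    ∫⁻ t in Set.Ioi m, g (t - r) = ∫⁻ u in Set.Ioi (m - r), g u := by
  rw [← lintegral_indicator measurableSet_Ioi, ← lintegral_indicator measurableSet_Ioi]
  have h : ∀ t : ℝ, (Set.Ioi m).indicator (fun t => g (t - r)) t
      = (fun t => (Set.Ioi (m - r)).indicator g t) (t + -r) := by
    intro t
    by_cases ht : t ∈ Set.Ioi m
    · rw [Set.indicator_of_mem ht]
      have : t + -r ∈ Set.Ioi (m - r) := by
        simp only [Set.mem_Ioi] at ht ⊢; linarith
      simp only [Set.indicator_of_mem this]
      norm_num [sub_eq_add_neg]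
    · rw [Set.indicator_of_notMem ht]
      have : t + -r ∉ Set.Ioi (m - r) := by
        simp only [Set.mem_Ioi] at ht ⊢; intro h'; exact ht (by linarith)
      simp only [Set.indicator_of_notMem this]
  simp_rw [h]
  exact lintegral_add_right_eq_self (fun t => (Set.Ioi (m - r)).indicator g t) (-r)

lemma lint_shift_Ioc (g : ℝ → ℝ≥0∞) (r a b : ℝ) :
    ∫⁻ t in Set.Ioc a b, g (t - r) = ∫⁻ u in Set.Ioc (a - r) (b - r), g u := by
  rw [← lintegral_indicator measurableSet_Ioc, ← lintegral_indicator measurableSet_Ioc]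
  have h : ∀ t : ℝ, (Set.Ioc a b).indicator (fun t => g (t - r)) t
      = (fun t => (Set.Ioc (a - r) (b - r)).indicator g t) (t + -r) := by
    intro t
    by_cases ht : t ∈ Set.Ioc a b
    · rw [Set.indicator_of_mem ht]
      have : t + -r ∈ Set.Ioc (a - r) (b - r) := by
        simp only [Set.mem_Ioc] at ht ⊢; constructor <;> linarith [ht.1, ht.2]
      simp only [Set.indicator_of_mem this]
      norm_num [sub_eq_add_neg]
    · rw [Set.indicator_of_notMem ht]
      have : t + -r ∉ Set.Ioc (a - r) (b - r) := by
        simp only [Set.mem_Ioc] at ht ⊢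
        intro h'
        exact ht ⟨by linarith [h'.1], by linarith [h'.2]⟩
      simp only [Set.indicator_of_notMem this]
  simp_rw [h]
  exact lintegral_add_right_eq_self (fun t => (Set.Ioc (a - r) (b - r)).indicator g t) (-r)

lemma lint_tail (γ m : ℝ) (hγ : 1 < γ) (hm : 0 < m) :
    ∫⁻ u in Set.Ioi m, ENNReal.ofReal (u ^ (-γ))
      = ENNReal.ofReal (m ^ (1 - γ) / (γ - 1)) := by
  have hint : IntegrableOn (fun u : ℝ => u ^ (-γ)) (Set.Ioi m) :=
    integrableOn_Ioi_rpow_of_lt (by linarith) hm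
  have hnn : 0 ≤ᵐ[volume.restrict (Set.Ioi m)] fun u : ℝ => u ^ (-γ) := by
    filter_upwards [ae_restrict_mem measurableSet_Ioi] with u hu
    exact Real.rpow_nonneg (le_of_lt (hm.trans hu)) _
  rw [← MeasureTheory.ofReal_integral_eq_lintegral_ofReal hint hnn]
  congr 1
  rw [integral_Ioi_rpow_of_lt (by linarith) hm]
  rw [show -γ + 1 = 1 - γ by ring]
  rw [div_eq_div_iff (by linarith) (by linarith)]
  ring
lemma min_le_A {r t β : ℝ} (hr : 0 < r) (ht : r < t) (hβ : 0 ≤ β) :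
    min 1 ((t^2 - r^2) ^ (-β)) ≤ (t - r) ^ (-(2*β)) := by
  have htr : 0 < t - r := by linarith
  have h2 : 0 < (t - r)^2 := by positivity
  have h1 : (t - r)^2 ≤ t^2 - r^2 := by nlinarith
  have heq : ((t - r)^2 : ℝ) ^ (-β) = (t - r) ^ (-(2*β)) := by
    rw [← Real.rpow_two, ← Real.rpow_mul htr.le]
    norm_num
  calc min 1 ((t^2 - r^2) ^ (-β)) ≤ (t^2 - r^2) ^ (-β) := min_le_right _ _
    _ ≤ ((t - r)^2) ^ (-β) := Real.rpow_le_rpow_of_nonpos h2 h1 (by linarith)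
    _ = (t - r) ^ (-(2*β)) := heq

lemma min_le_B {r t β : ℝ} (hr : 0 < r) (ht : r < t) (hβ : 0 ≤ β) :
    min 1 ((t^2 - r^2) ^ (-β)) ≤ (r * (t - r)) ^ (-β) := by
  have htr : 0 < t - r := by linarith
  have h2 : 0 < r * (t - r) := by positivity
  have h1 : r * (t - r) ≤ t^2 - r^2 := by nlinarith
  calc min 1 ((t^2 - r^2) ^ (-β)) ≤ (t^2 - r^2) ^ (-β) := min_le_right _ _
    _ ≤ (r * (t - r)) ^ (-β) := Real.rpow_le_rpow_of_nonpos h2 h1 (by linarith)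

lemma piece_const {r a b : ℝ} {β : ℝ} (hab : a ≤ b) :
    ∫⁻ t in Set.Ioc a b, ENNReal.ofReal (min 1 ((t^2 - r^2) ^ (-β)))
      ≤ ENNReal.ofReal (b - a) := by
  calc ∫⁻ t in Set.Ioc a b, ENNReal.ofReal (min 1 ((t^2 - r^2) ^ (-β)))
      ≤ ∫⁻ _ in Set.Ioc a b, (1 : ℝ≥0∞) :=
        setLIntegral_mono' measurableSet_Ioc fun t _ =>
          ENNReal.ofReal_le_one.mpr (min_le_left _ _)
    _ = volume (Set.Ioc a b) := setLIntegral_one _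
    _ = ENNReal.ofReal (b - a) := Real.volume_Ioc

lemma boundA {β r : ℝ} (hβ1 : 3/4 ≤ β) (hβ2 : β < 1) (hr : 0 < r) :
    ∫⁻ t in Set.Ioi r, ENNReal.ofReal (min 1 ((t^2 - r^2) ^ (-β)))
      ≤ ENNReal.ofReal ((3 + 1/(1-β) + 1/(2*β-1)) * r ^ (1 - 2*β)) := by
  have h2β : 1 < 2*β := by linarith
  have hc1 : 0 < 1/(1-β) := by
    have : 0 < 1 - β := by linarith
    positivity
  have hc2 : 0 < 1/(2*β-1) := by
    have : 0 < 2*β - 1 := by linarith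
    positivity
  rcases le_total r 1 with hr1 | hr1
  · -- r ≤ 1
    have hRge : 1 ≤ r ^ (1 - 2*β) :=
      Real.one_le_rpow_of_pos_of_le_one_of_nonpos hr hr1 (by linarith)
    rw [show Set.Ioi r = Set.Ioc r (r+1) ∪ Set.Ioi (r+1) from
      (Set.Ioc_union_Ioi_eq_Ioi (by linarith)).symm,
      lintegral_union measurableSet_Ioi Set.Ioc_disjoint_Ioi_same]
    have hp1 := piece_const (r := r) (β := β) (show r ≤ r + 1 by linarith)
    have hp2 : ∫⁻ t in Set.Ioi (r+1), ENNReal.ofReal (min 1 ((t^2 - r^2) ^ (-β)))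
        ≤ ENNReal.ofReal (1/(2*β-1)) := by
      calc ∫⁻ t in Set.Ioi (r+1), ENNReal.ofReal (min 1 ((t^2 - r^2) ^ (-β)))
          ≤ ∫⁻ t in Set.Ioi (r+1), ENNReal.ofReal ((t - r) ^ (-(2*β))) :=
            setLIntegral_mono' measurableSet_Ioi fun t ht =>
              ENNReal.ofReal_le_ofReal (min_le_A hr (by simp only [Set.mem_Ioi] at ht; linarith)
                (by linarith))
        _ = ∫⁻ u in Set.Ioi 1, ENNReal.ofReal (u ^ (-(2*β))) := by
            have := lint_shift_Ioi (fun u => ENNReal.ofReal (u ^ (-(2*β)))) r (r+1)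
            rw [show r + 1 - r = 1 by ring] at this
            exact this
        _ = ENNReal.ofReal ((1:ℝ) ^ (1 - 2*β) / (2*β - 1)) := lint_tail (2*β) 1 h2β one_pos
        _ = ENNReal.ofReal (1/(2*β-1)) := by rw [Real.one_rpow]
    calc (∫⁻ t in Set.Ioc r (r+1), ENNReal.ofReal (min 1 ((t^2 - r^2) ^ (-β))))
          + ∫⁻ t in Set.Ioi (r+1), ENNReal.ofReal (min 1 ((t^2 - r^2) ^ (-β)))
        ≤ ENNReal.ofReal (r + 1 - r) + ENNReal.ofReal (1/(2*β-1)) := add_le_add hp1 hp2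
      _ = ENNReal.ofReal ((r + 1 - r) + 1/(2*β-1)) :=
          (ENNReal.ofReal_add (by linarith) (by linarith)).symm
      _ ≤ ENNReal.ofReal ((3 + 1/(1-β) + 1/(2*β-1)) * r ^ (1 - 2*β)) := by
          apply ENNReal.ofReal_le_ofReal
          nlinarith [mul_nonneg (show (0:ℝ) ≤ 3 + 1/(1-β) + 1/(2*β-1) by linarith)
            (show (0:ℝ) ≤ r ^ (1-2*β) - 1 by linarith)]
  · -- 1 ≤ r
    have hr0 : (0:ℝ) < r := hr
    have hinv : 1/r ≤ r := by
      rw [div_le_iff₀ hr0]; nlinarith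
    have hinv0 : 0 < 1/r := by positivity
    have hRpos : 0 < r ^ (1 - 2*β) := Real.rpow_pos_of_pos hr0 _
    have h1rR : 1/r ≤ r ^ (1 - 2*β) := by
      have : r ^ (-1 : ℝ) ≤ r ^ (1 - 2*β) :=
        Real.rpow_le_rpow_of_exponent_le hr1 (by linarith)
      rwa [Real.rpow_neg_one, inv_eq_one_div] at this
    rw [show Set.Ioi r = Set.Ioc r (r + 1/r) ∪ Set.Ioi (r + 1/r) from
      (Set.Ioc_union_Ioi_eq_Ioi (by linarith)).symm,
      lintegral_union measurableSet_Ioi Set.Ioc_disjoint_Ioi_same,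
      show Set.Ioi (r + 1/r) = Set.Ioc (r + 1/r) (2*r) ∪ Set.Ioi (2*r) from
      (Set.Ioc_union_Ioi_eq_Ioi (by linarith)).symm,
      lintegral_union measurableSet_Ioi Set.Ioc_disjoint_Ioi_same]
    have hp1 := piece_const (r := r) (β := β) (show r ≤ r + 1/r by linarith)
    have hp2 : ∫⁻ t in Set.Ioc (r + 1/r) (2*r), ENNReal.ofReal (min 1 ((t^2 - r^2) ^ (-β)))
        ≤ ENNReal.ofReal (r ^ (1 - 2*β) / (1 - β)) := by
      have hstep1 : ∫⁻ t in Set.Ioc (r + 1/r) (2*r), ENNReal.ofReal (min 1 ((t^2 - r^2) ^ (-β)))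
          ≤ ∫⁻ u in Set.Ioc (1/r) r, ENNReal.ofReal ((r * u) ^ (-β)) := by
        calc ∫⁻ t in Set.Ioc (r + 1/r) (2*r), ENNReal.ofReal (min 1 ((t^2 - r^2) ^ (-β)))
            ≤ ∫⁻ t in Set.Ioc (r + 1/r) (2*r), ENNReal.ofReal ((r * (t - r)) ^ (-β)) :=
              setLIntegral_mono' measurableSet_Ioc fun t ht =>
                ENNReal.ofReal_le_ofReal (min_le_B hr
                  (by simp only [Set.mem_Ioc] at ht; nlinarith [ht.1]) (by linarith))
          _ = ∫⁻ u in Set.Ioc (1/r) r, ENNReal.ofReal ((r * u) ^ (-β)) := by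
              have := lint_shift_Ioc (fun u => ENNReal.ofReal ((r * u) ^ (-β))) r (r + 1/r) (2*r)
              rw [show r + 1/r - r = 1/r by ring, show 2*r - r = r by ring] at this
              exact this
      refine hstep1.trans ?_
      have hcont : ContinuousOn (fun u : ℝ => (r * u) ^ (-β)) (Set.Icc (1/r) r) := by
        apply ContinuousOn.rpow_const
          ((by fun_prop : Continuous fun u : ℝ => r * u).continuousOn)
        intro u hu
        have hu0 : 0 < u := lt_of_lt_of_le hinv0 hu.1
        exact Or.inl (ne_of_gt (by positivity))
      have hintg : IntegrableOn (fun u : ℝ => (r * u) ^ (-β)) (Set.Ioc (1/r) r) :=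
        (hcont.integrableOn_Icc).mono_set Set.Ioc_subset_Icc_self
      have hnn : 0 ≤ᵐ[volume.restrict (Set.Ioc (1/r) r)] fun u : ℝ => (r * u) ^ (-β) := by
        filter_upwards [ae_restrict_mem measurableSet_Ioc] with u hu
        exact Real.rpow_nonneg (by nlinarith [hu.1]) _
      rw [← MeasureTheory.ofReal_integral_eq_lintegral_ofReal hintg hnn]
      apply ENNReal.ofReal_le_ofReal
      rw [← intervalIntegral.integral_of_le hinv]
      have hcongr : (∫ u in (1/r)..r, (r * u) ^ (-β))
          = ∫ u in (1/r)..r, r ^ (-β) * u ^ (-β) := by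
        refine intervalIntegral.integral_congr fun u hu => ?_
        rw [Set.uIcc_of_le hinv] at hu
        exact Real.mul_rpow hr0.le (by nlinarith [hu.1])
      rw [hcongr, intervalIntegral.integral_const_mul,
        integral_rpow (Or.inl (by linarith : (-1:ℝ) < -β))]
      have e1 : (-β + 1 : ℝ) = 1 - β := by ring
      rw [e1]
      have h1 : (0:ℝ) ≤ (1/r) ^ (1 - β) := Real.rpow_nonneg hinv0.le _
      have h2 : r ^ (-β) * r ^ (1 - β) = r ^ (1 - 2*β) := by
        rw [← Real.rpow_add hr0]; congr 1; ring
      have h3 : (0:ℝ) < 1 - β := by linarith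
      have h4 : (0:ℝ) ≤ r ^ (-β) := Real.rpow_nonneg hr0.le _
      have e2 : r ^ (-β) * ((r ^ (1-β) - (1/r) ^ (1-β)) / (1-β))
          = (r ^ (-β) * r ^ (1-β) - r ^ (-β) * (1/r) ^ (1-β)) / (1-β) := by ring
      rw [e2, h2, div_le_div_iff₀ h3 h3]
      nlinarith [mul_nonneg (mul_nonneg h4 h1) h3.le]
    have hp3 : ∫⁻ t in Set.Ioi (2*r), ENNReal.ofReal (min 1 ((t^2 - r^2) ^ (-β)))
        ≤ ENNReal.ofReal (r ^ (1 - 2*β) / (2*β - 1)) := by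
      calc ∫⁻ t in Set.Ioi (2*r), ENNReal.ofReal (min 1 ((t^2 - r^2) ^ (-β)))
          ≤ ∫⁻ t in Set.Ioi (2*r), ENNReal.ofReal ((t - r) ^ (-(2*β))) :=
            setLIntegral_mono' measurableSet_Ioi fun t ht =>
              ENNReal.ofReal_le_ofReal (min_le_A hr
                (by simp only [Set.mem_Ioi] at ht; nlinarith) (by linarith))
        _ = ∫⁻ u in Set.Ioi r, ENNReal.ofReal (u ^ (-(2*β))) := by
            have := lint_shift_Ioi (fun u => ENNReal.ofReal (u ^ (-(2*β)))) r (2*r)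
            rw [show 2*r - r = r by ring] at this
            exact this
        _ = ENNReal.ofReal (r ^ (1 - 2*β) / (2*β - 1)) := lint_tail (2*β) r h2β hr0
    rw [show r + 1/r - r = 1/r by ring] at hp1
    have ha2 : (0:ℝ) ≤ r ^ (1 - 2*β) / (1 - β) := div_nonneg hRpos.le (by linarith)
    have ha3 : (0:ℝ) ≤ r ^ (1 - 2*β) / (2*β - 1) := by
      apply div_nonneg hRpos.le; linarith
    calc (∫⁻ t in Set.Ioc r (r + 1/r), ENNReal.ofReal (min 1 ((t^2 - r^2) ^ (-β))))
          + ((∫⁻ t in Set.Ioc (r + 1/r) (2*r), ENNReal.ofReal (min 1 ((t^2 - r^2) ^ (-β))))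
          + ∫⁻ t in Set.Ioi (2*r), ENNReal.ofReal (min 1 ((t^2 - r^2) ^ (-β))))
        ≤ ENNReal.ofReal (1/r) + (ENNReal.ofReal (r ^ (1 - 2*β) / (1 - β))
          + ENNReal.ofReal (r ^ (1 - 2*β) / (2*β - 1))) :=
          add_le_add hp1 (add_le_add hp2 hp3)
      _ = ENNReal.ofReal (1/r + (r ^ (1 - 2*β) / (1 - β) + r ^ (1 - 2*β) / (2*β - 1))) := by
          rw [← ENNReal.ofReal_add ha2 ha3, ← ENNReal.ofReal_add hinv0.le (by linarith)]
      _ ≤ ENNReal.ofReal ((3 + 1/(1-β) + 1/(2*β-1)) * r ^ (1 - 2*β)) := by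
          apply ENNReal.ofReal_le_ofReal
          have hfrac1 : r ^ (1 - 2*β) / (1 - β) = r ^ (1 - 2*β) * (1/(1-β)) := by ring
          have hfrac2 : r ^ (1 - 2*β) / (2*β - 1) = r ^ (1 - 2*β) * (1/(2*β-1)) := by ring
          rw [hfrac1, hfrac2]
          nlinarith [hRpos, h1rR]
lemma boundB {β r : ℝ} (hβ1 : 1 < β) (hr : 0 < r) :
    ∫⁻ t in Set.Ioi r, ENNReal.ofReal (min 1 ((t^2 - r^2) ^ (-β)))
      ≤ ENNReal.ofReal ((3 + 1/(β-1) + 1/(2*β-1)) * r ^ (-1 : ℝ)) := by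
  have h2β : 1 < 2*β := by linarith
  have hc1 : 0 < 1/(β-1) := by
    have : 0 < β - 1 := by linarith
    positivity
  have hc2 : 0 < 1/(2*β-1) := by
    have : 0 < 2*β - 1 := by linarith
    positivity
  have hr0 : (0:ℝ) < r := hr
  rcases le_total r 1 with hr1 | hr1
  · have hRge : 1 ≤ r ^ (-1 : ℝ) :=
      Real.one_le_rpow_of_pos_of_le_one_of_nonpos hr hr1 (by norm_num)
    rw [show Set.Ioi r = Set.Ioc r (r+1) ∪ Set.Ioi (r+1) from
      (Set.Ioc_union_Ioi_eq_Ioi (by linarith)).symm,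
      lintegral_union measurableSet_Ioi Set.Ioc_disjoint_Ioi_same]
    have hp1 := piece_const (r := r) (β := β) (show r ≤ r + 1 by linarith)
    have hp2 : ∫⁻ t in Set.Ioi (r+1), ENNReal.ofReal (min 1 ((t^2 - r^2) ^ (-β)))
        ≤ ENNReal.ofReal (1/(2*β-1)) := by
      calc ∫⁻ t in Set.Ioi (r+1), ENNReal.ofReal (min 1 ((t^2 - r^2) ^ (-β)))
          ≤ ∫⁻ t in Set.Ioi (r+1), ENNReal.ofReal ((t - r) ^ (-(2*β))) :=
            setLIntegral_mono' measurableSet_Ioi fun t ht =>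
              ENNReal.ofReal_le_ofReal (min_le_A hr (by simp only [Set.mem_Ioi] at ht; linarith)
                (by linarith))
        _ = ∫⁻ u in Set.Ioi 1, ENNReal.ofReal (u ^ (-(2*β))) := by
            have := lint_shift_Ioi (fun u => ENNReal.ofReal (u ^ (-(2*β)))) r (r+1)
            rw [show r + 1 - r = 1 by ring] at this
            exact this
        _ = ENNReal.ofReal ((1:ℝ) ^ (1 - 2*β) / (2*β - 1)) := lint_tail (2*β) 1 h2β one_pos
        _ = ENNReal.ofReal (1/(2*β-1)) := by rw [Real.one_rpow]
    calc (∫⁻ t in Set.Ioc r (r+1), ENNReal.ofReal (min 1 ((t^2 - r^2) ^ (-β))))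
          + ∫⁻ t in Set.Ioi (r+1), ENNReal.ofReal (min 1 ((t^2 - r^2) ^ (-β)))
        ≤ ENNReal.ofReal (r + 1 - r) + ENNReal.ofReal (1/(2*β-1)) := add_le_add hp1 hp2
      _ = ENNReal.ofReal ((r + 1 - r) + 1/(2*β-1)) :=
          (ENNReal.ofReal_add (by linarith) (by linarith)).symm
      _ ≤ ENNReal.ofReal ((3 + 1/(β-1) + 1/(2*β-1)) * r ^ (-1 : ℝ)) := by
          apply ENNReal.ofReal_le_ofReal
          nlinarith [mul_nonneg (show (0:ℝ) ≤ 3 + 1/(β-1) + 1/(2*β-1) by linarith)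
            (show (0:ℝ) ≤ r ^ (-1:ℝ) - 1 by linarith)]
  · have hinv : 1/r ≤ r := by
      rw [div_le_iff₀ hr0]; nlinarith
    have hinv0 : 0 < 1/r := by positivity
    have hrinv : r ^ (-1 : ℝ) = 1/r := by
      rw [Real.rpow_neg_one, inv_eq_one_div]
    have hRpos : 0 < r ^ (-1 : ℝ) := Real.rpow_pos_of_pos hr0 _
    rw [show Set.Ioi r = Set.Ioc r (r + 1/r) ∪ Set.Ioi (r + 1/r) from
      (Set.Ioc_union_Ioi_eq_Ioi (by linarith)).symm,
      lintegral_union measurableSet_Ioi Set.Ioc_disjoint_Ioi_same]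
    have hp1 := piece_const (r := r) (β := β) (show r ≤ r + 1/r by linarith)
    rw [show r + 1/r - r = 1/r by ring] at hp1
    have hp2 : ∫⁻ t in Set.Ioi (r + 1/r), ENNReal.ofReal (min 1 ((t^2 - r^2) ^ (-β)))
        ≤ ENNReal.ofReal (r ^ (-1:ℝ) / (β-1)) := by
      calc ∫⁻ t in Set.Ioi (r + 1/r), ENNReal.ofReal (min 1 ((t^2 - r^2) ^ (-β)))
          ≤ ∫⁻ t in Set.Ioi (r + 1/r), ENNReal.ofReal ((r * (t - r)) ^ (-β)) :=
            setLIntegral_mono' measurableSet_Ioi fun t ht =>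
              ENNReal.ofReal_le_ofReal (min_le_B hr
                (by simp only [Set.mem_Ioi] at ht; nlinarith) (by linarith))
        _ = ∫⁻ u in Set.Ioi (1/r), ENNReal.ofReal ((r * u) ^ (-β)) := by
            have := lint_shift_Ioi (fun u => ENNReal.ofReal ((r * u) ^ (-β))) r (r + 1/r)
            rw [show r + 1/r - r = 1/r by ring] at this
            exact this
        _ = ∫⁻ u in Set.Ioi (1/r), ENNReal.ofReal (r ^ (-β)) * ENNReal.ofReal (u ^ (-β)) := by
            refine setLIntegral_congr_fun measurableSet_Ioi ?_
            intro u hu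
            show ENNReal.ofReal ((r * u) ^ (-β)) = ENNReal.ofReal (r ^ (-β)) * ENNReal.ofReal (u ^ (-β))
            rw [← ENNReal.ofReal_mul (Real.rpow_nonneg hr0.le _)]
            congr 1
            exact Real.mul_rpow hr0.le (le_of_lt (hinv0.trans hu))
        _ = ENNReal.ofReal (r ^ (-β)) * ∫⁻ u in Set.Ioi (1/r), ENNReal.ofReal (u ^ (-β)) :=
            lintegral_const_mul' _ _ ENNReal.ofReal_ne_top
        _ = ENNReal.ofReal (r ^ (-β)) * ENNReal.ofReal ((1/r) ^ (1 - β) / (β - 1)) := by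
            rw [lint_tail β (1/r) hβ1 hinv0]
        _ = ENNReal.ofReal (r ^ (-β) * ((1/r) ^ (1 - β) / (β - 1))) :=
            (ENNReal.ofReal_mul (Real.rpow_nonneg hr0.le _)).symm
        _ = ENNReal.ofReal (r ^ (-1:ℝ) / (β-1)) := by
            congr 1
            have e1 : ((1:ℝ)/r) ^ (1 - β) = r ^ (β - 1) := by
              rw [one_div, ← Real.rpow_neg_one r, ← Real.rpow_mul hr0.le]
              congr 1
              ring
            rw [e1, div_eq_mul_inv, ← mul_assoc, ← Real.rpow_add hr0,
              show -β + (β - 1) = (-1 : ℝ) by ring, ← div_eq_mul_inv]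
    calc (∫⁻ t in Set.Ioc r (r + 1/r), ENNReal.ofReal (min 1 ((t^2 - r^2) ^ (-β))))
          + ∫⁻ t in Set.Ioi (r + 1/r), ENNReal.ofReal (min 1 ((t^2 - r^2) ^ (-β)))
        ≤ ENNReal.ofReal (1/r) + ENNReal.ofReal (r ^ (-1:ℝ) / (β-1)) := add_le_add hp1 hp2
      _ = ENNReal.ofReal (1/r + r ^ (-1:ℝ) / (β-1)) :=
          (ENNReal.ofReal_add hinv0.le (div_nonneg hRpos.le (by linarith))).symm
      _ ≤ ENNReal.ofReal ((3 + 1/(β-1) + 1/(2*β-1)) * r ^ (-1 : ℝ)) := by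
          apply ENNReal.ofReal_le_ofReal
          rw [hrinv]
          have h1 : (1:ℝ)/r / (β-1) = (1/r) * (1/(β-1)) := by ring
          nlinarith [hinv0, hc1, hc2]
lemma SB_lint_le (p r : ℝ) (hp : 1 ≤ p) (hr : 0 < r) :
    ∫⁻ t in Set.Ioi (0:ℝ), ENNReal.ofReal (|SB r t| ^ p)
      ≤ ∫⁻ t in Set.Ioi r, ENNReal.ofReal (min 1 ((t^2 - r^2) ^ (-(3*p/4)))) := by
  have hp0 : (0:ℝ) < p := by linarith
  set β : ℝ := 3*p/4 with hβdef
  set G : ℝ → ℝ≥0∞ := fun t =>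
    (Set.Ioi r).indicator (fun t => ENNReal.ofReal (min 1 ((t^2-r^2) ^ (-β)))) t with hGdef
  have hne : ∀ᵐ t ∂(volume.restrict (Set.Ioi (0:ℝ))), t ≠ r := by
    have h0 : (volume.restrict (Set.Ioi (0:ℝ))) {r} = 0 := by
      rw [Measure.restrict_apply (measurableSet_singleton r)]
      exact measure_mono_null Set.inter_subset_left Real.volume_singleton
    rw [MeasureTheory.ae_iff]
    have hset : {t : ℝ | ¬ t ≠ r} = {r} := by ext t; simp
    rw [hset]
    exact h0
  have hae : ∀ᵐ t ∂(volume.restrict (Set.Ioi (0:ℝ))),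
      ENNReal.ofReal (|SB r t| ^ p) ≤ G t := by
    filter_upwards [hne] with t htne
    rcases lt_trichotomy t r with h | h | h
    · have hSB : SB r t = 0 := by
        unfold SB; rw [if_neg (not_le.mpr h), mul_zero]
      rw [hSB, abs_zero, Real.zero_rpow (by linarith : p ≠ 0)]
      simp
    · exact absurd h htne
    · have hmem : t ∈ Set.Ioi r := h
      have hG : G t = ENNReal.ofReal (min 1 ((t^2-r^2) ^ (-β))) := by
        rw [hGdef]; exact Set.indicator_of_mem hmem _
      rw [hG]
      apply ENNReal.ofReal_le_ofReal
      have h1 := SB_pointwise hr h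
      have h2 : |SB r t| ^ p ≤ (min 1 ((t^2-r^2) ^ (-(3/4):ℝ))) ^ p :=
        Real.rpow_le_rpow (abs_nonneg _) h1 hp0.le
      refine h2.trans ?_
      have hw : 0 < t^2 - r^2 := by nlinarith
      set u : ℝ := (t^2-r^2) ^ (-(3/4):ℝ) with hudef
      have hu0 : 0 ≤ u := Real.rpow_nonneg hw.le _
      have hup : u ^ p = (t^2-r^2) ^ (-β) := by
        rw [hudef, ← Real.rpow_mul hw.le]
        congr 1
        rw [hβdef]; ring
      rcases le_total u 1 with hu1 | hu1
      · rw [min_eq_right hu1, ← hup]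
        exact le_min (Real.rpow_le_one hu0 hu1 hp0.le) le_rfl
      · rw [min_eq_left hu1, Real.one_rpow, ← hup]
        exact le_min le_rfl (Real.one_le_rpow hu1 hp0.le)
  calc ∫⁻ t in Set.Ioi (0:ℝ), ENNReal.ofReal (|SB r t| ^ p)
      ≤ ∫⁻ t in Set.Ioi (0:ℝ), G t := lintegral_mono_ae hae
    _ ≤ ∫⁻ t, G t := setLIntegral_le_lintegral _ _
    _ = ∫⁻ t in Set.Ioi r, ENNReal.ofReal (min 1 ((t^2-r^2) ^ (-β))) :=
        lintegral_indicator measurableSet_Ioi _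

/-- `‖S_B(r,·)‖_{L^p_t(0,∞)} ≤ C_p r^{1/p − 3/2}` for `1 ≤ p < 4/3`,
`‖S_B(r,·)‖_{L^p_t(0,∞)} ≤ C_p r^{−1/p}` for `4/3 < p < ∞`, and
`S_B(r,t) ≤ C` uniformly in `r > 0`, `t ≥ 0`. -/
theorem SB_Lp_bounds :
    (∀ p : ℝ, 1 ≤ p → p < 4 / 3 → ∃ C : ℝ, 0 < C ∧ ∀ r : ℝ, 0 < r →
      (∫⁻ t in Set.Ioi (0 : ℝ), ENNReal.ofReal (|SB r t| ^ p)) ^ (1 / p) ≤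
        ENNReal.ofReal (C * r ^ (1 / p - 3 / 2))) ∧
    (∀ p : ℝ, 4 / 3 < p → ∃ C : ℝ, 0 < C ∧ ∀ r : ℝ, 0 < r →
      (∫⁻ t in Set.Ioi (0 : ℝ), ENNReal.ofReal (|SB r t| ^ p)) ^ (1 / p) ≤
        ENNReal.ofReal (C * r ^ (-(1 / p)))) ∧
    (∃ C : ℝ, 0 < C ∧ ∀ r : ℝ, 0 < r → ∀ t : ℝ, 0 ≤ t → SB r t ≤ C) := by
  refine ⟨?_, ?_, ?_⟩
  · intro p hp1 hp2
    have hp0 : (0:ℝ) < p := by linarith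
    set β : ℝ := 3*p/4 with hβdef
    have hβ1 : 3/4 ≤ β := by rw [hβdef]; linarith
    have hβ2 : β < 1 := by rw [hβdef]; linarith
    set Creal : ℝ := 3 + 1/(1-β) + 1/(2*β-1) with hCdef
    have hC0 : 0 < Creal := by
      have h1 : 0 < 1/(1-β) := by
        have : 0 < 1 - β := by linarith
        positivity
      have h2 : 0 < 1/(2*β-1) := by
        have : 0 < 2*β - 1 := by linarith
        positivity
      rw [hCdef]; linarith
    refine ⟨Creal ^ (1/p), Real.rpow_pos_of_pos hC0 _, fun r hr => ?_⟩
    have h1 := (SB_lint_le p r hp1 hr).trans (boundA hβ1 hβ2 hr)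
    have h2 := ENNReal.rpow_le_rpow h1 (by positivity : (0:ℝ) ≤ 1/p)
    refine h2.trans ?_
    have hA0 : 0 < Creal * r ^ (1 - 2*β) := mul_pos hC0 (Real.rpow_pos_of_pos hr _)
    rw [ENNReal.ofReal_rpow_of_pos hA0]
    apply ENNReal.ofReal_le_ofReal
    rw [Real.mul_rpow hC0.le (Real.rpow_pos_of_pos hr _).le,
      ← Real.rpow_mul hr.le]
    have he : (1 - 2*β) * (1/p) = 1/p - 3/2 := by
      rw [hβdef]; field_simp; ring
    rw [he]
  · intro p hp2
    have hp0 : (0:ℝ) < p := by linarith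
    have hp1 : (1:ℝ) ≤ p := by linarith
    set β : ℝ := 3*p/4 with hβdef
    have hβ1 : 1 < β := by rw [hβdef]; linarith
    set Creal : ℝ := 3 + 1/(β-1) + 1/(2*β-1) with hCdef
    have hC0 : 0 < Creal := by
      have h1 : 0 < 1/(β-1) := by
        have : 0 < β - 1 := by linarith
        positivity
      have h2 : 0 < 1/(2*β-1) := by
        have : 0 < 2*β - 1 := by linarith
        positivity
      rw [hCdef]; linarith
    refine ⟨Creal ^ (1/p), Real.rpow_pos_of_pos hC0 _, fun r hr => ?_⟩
    have h1 := (SB_lint_le p r hp1 hr).trans (boundB hβ1 hr)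
    have h2 := ENNReal.rpow_le_rpow h1 (by positivity : (0:ℝ) ≤ 1/p)
    refine h2.trans ?_
    have hA0 : 0 < Creal * r ^ (-1:ℝ) := mul_pos hC0 (Real.rpow_pos_of_pos hr _)
    rw [ENNReal.ofReal_rpow_of_pos hA0]
    apply ENNReal.ofReal_le_ofReal
    rw [Real.mul_rpow hC0.le (Real.rpow_pos_of_pos hr _).le,
      ← Real.rpow_mul hr.le]
    have he : (-1:ℝ) * (1/p) = -(1/p) := by ring
    rw [he]
  · exact ⟨1, one_pos, fun r hr t _ => (le_abs_self _).trans (SB_abs_le_one hr)⟩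
end
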